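/- arXiv:1811.09615 — 7 statements merged into one kernel-verified Lean document; each statement's English description precedes it below -/
import Mathlib

section
/- Locality of conditionally convex maps: let D_t : L²(F_T) → L²(F_t) be normalized (D_t(0) = 0) and conditionally convex, i.e. D_t(λX + (1−λ)Y) ≤ λD_t(X) + (1−λ)D_t(Y) a.s. for all X, Y ∈ L²(F_T) and all F_t-measurable λ with 0 ≤ λ ≤ 1. Then for every A ∈ F_t and all X₁, X₂, X ∈ L²(F_T): (i) D_t(1_A X₁ + 1_{A^c} X₂) = 1_A D_t(X₁) + 1_{A^c} D_t(X₂) a.s., and (ii) D_t(1_A X) = 1_A D_t(X) a.s. -/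
open MeasureTheory

/-- **Locality of conditionally convex maps.**  Here the ambient σ-algebra `m0` plays the role
of `F_T` and `Ft ≤ m0` is the σ-algebra `F_t`.  If `D : L²(F_T) → L²(F_t)` is normalized
(`D(0) = 0`) and conditionally convex, then for every `A ∈ F_t`,
(i) `D(1_A X₁ + 1_{Aᶜ} X₂) = 1_A D(X₁) + 1_{Aᶜ} D(X₂)` a.s., and
(ii) `D(1_A X) = 1_A D(X)` a.s. -/
theorem locality_of_conditionallyConvex {Ω : Type*} {m0 : MeasurableSpace Ω}
    (μ : Measure Ω) [IsProbabilityMeasure μ]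
    (Ft : MeasurableSpace Ω) (hFt : Ft ≤ m0)
    (D : (Ω → ℝ) → Ω → ℝ)
    (hDmap : ∀ X : Ω → ℝ, MemLp X 2 μ →
      StronglyMeasurable[Ft] (D X) ∧ MemLp (D X) 2 μ)
    (hnorm : D 0 =ᵐ[μ] 0)
    (hconv : ∀ X Y : Ω → ℝ, MemLp X 2 μ → MemLp Y 2 μ →
      ∀ lam : Ω → ℝ, Measurable[Ft] lam → (∀ ω, 0 ≤ lam ω) → (∀ ω, lam ω ≤ 1) →
      D (fun ω => lam ω * X ω + (1 - lam ω) * Y ω) ≤ᵐ[μ]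
        fun ω => lam ω * D X ω + (1 - lam ω) * D Y ω) :
    ∀ A : Set Ω, MeasurableSet[Ft] A →
      (∀ X₁ X₂ : Ω → ℝ, MemLp X₁ 2 μ → MemLp X₂ 2 μ →
        D (fun ω => A.indicator X₁ ω + Aᶜ.indicator X₂ ω) =ᵐ[μ]
          fun ω => A.indicator (D X₁) ω + Aᶜ.indicator (D X₂) ω) ∧
      (∀ X : Ω → ℝ, MemLp X 2 μ →
        D (A.indicator X) =ᵐ[μ] A.indicator (D X)) := by
  classical
  intro A hA
  -- the indicator of A as an Ft-measurable [0,1]-valued function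
  set lam : Ω → ℝ := A.indicator (fun _ => (1 : ℝ)) with hlam_def
  have hlam_meas : Measurable[Ft] lam :=
    (@measurable_const ℝ Ω _ Ft 1).indicator hA
  have hlam_apply : ∀ ω, lam ω = if ω ∈ A then 1 else 0 := by
    intro ω; simp [hlam_def, Set.indicator_apply]
  have hlam0 : ∀ ω, 0 ≤ lam ω := by
    intro ω; rw [hlam_apply]; split_ifs <;> norm_num
  have hlam1 : ∀ ω, lam ω ≤ 1 := by
    intro ω; rw [hlam_apply]; split_ifs <;> norm_num
  -- the complementary weight
  set lam' : Ω → ℝ := Aᶜ.indicator (fun _ => (1 : ℝ)) with hlam'_def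
  have hlam'_meas : Measurable[Ft] lam' :=
    (@measurable_const ℝ Ω _ Ft 1).indicator hA.compl
  have hlam'_apply : ∀ ω, lam' ω = if ω ∈ A then 0 else 1 := by
    intro ω; simp [hlam'_def, Set.indicator_apply]
  have hlam'0 : ∀ ω, 0 ≤ lam' ω := by
    intro ω; rw [hlam'_apply]; split_ifs <;> norm_num
  have hlam'1 : ∀ ω, lam' ω ≤ 1 := by
    intro ω; rw [hlam'_apply]; split_ifs <;> norm_num
  have main : ∀ X₁ X₂ : Ω → ℝ, MemLp X₁ 2 μ → MemLp X₂ 2 μ →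
      D (fun ω => A.indicator X₁ ω + Aᶜ.indicator X₂ ω) =ᵐ[μ]
        fun ω => A.indicator (D X₁) ω + Aᶜ.indicator (D X₂) ω := by
    intro X₁ X₂ hX₁ hX₂
    set mix : Ω → ℝ := fun ω => A.indicator X₁ ω + Aᶜ.indicator X₂ ω with hmix_def
    have hmix_apply : ∀ ω, mix ω = if ω ∈ A then X₁ ω else X₂ ω := by
      intro ω; by_cases h : ω ∈ A <;>
        simp [hmix_def, Set.indicator_apply, h]
    have hmixℒp : MemLp mix 2 μ := by
      have := (hX₁.indicator (hFt _ hA)).add (hX₂.indicator (hFt _ hA.compl))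
      exact this
    -- upper bound
    have h1 : D mix ≤ᵐ[μ] fun ω => lam ω * D X₁ ω + (1 - lam ω) * D X₂ ω := by
      have := hconv X₁ X₂ hX₁ hX₂ lam hlam_meas hlam0 hlam1
      have heq : (fun ω => lam ω * X₁ ω + (1 - lam ω) * X₂ ω) = mix := by
        funext ω
        rw [hmix_apply, hlam_apply]
        split_ifs <;> ring
      rwa [heq] at this
    -- lower bound on A
    have h2 : D X₁ ≤ᵐ[μ] fun ω => lam ω * D mix ω + (1 - lam ω) * D X₁ ω := by
      have := hconv mix X₁ hmixℒp hX₁ lam hlam_meas hlam0 hlam1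
      have heq : (fun ω => lam ω * mix ω + (1 - lam ω) * X₁ ω) = X₁ := by
        funext ω
        rw [hmix_apply, hlam_apply]
        split_ifs <;> ring
      rwa [heq] at this
    -- lower bound on Aᶜ
    have h3 : D X₂ ≤ᵐ[μ] fun ω => lam' ω * D mix ω + (1 - lam' ω) * D X₂ ω := by
      have := hconv mix X₂ hmixℒp hX₂ lam' hlam'_meas hlam'0 hlam'1
      have heq : (fun ω => lam' ω * mix ω + (1 - lam' ω) * X₂ ω) = X₂ := by
        funext ω
        rw [hmix_apply, hlam'_apply]
        split_ifs <;> ring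
      rwa [heq] at this
    filter_upwards [h1, h2, h3] with ω h1ω h2ω h3ω
    by_cases h : ω ∈ A
    · have hl : lam ω = 1 := by rw [hlam_apply]; simp [h]
      rw [hl] at h1ω h2ω
      have : D mix ω = D X₁ ω := le_antisymm (by linarith) (by linarith)
      simp [this, Set.indicator_apply, h]
    · have hl : lam ω = 0 := by rw [hlam_apply]; simp [h]
      have hl' : lam' ω = 1 := by rw [hlam'_apply]; simp [h]
      rw [hl] at h1ω; rw [hl'] at h3ω
      have : D mix ω = D X₂ ω := le_antisymm (by linarith) (by linarith)
      simp [this, Set.indicator_apply, h]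
  refine ⟨main, ?_⟩
  intro X hX
  have h0 : MemLp (0 : Ω → ℝ) 2 μ := MemLp.zero
  have := main X 0 hX h0
  have heq : (fun ω => A.indicator X ω + Aᶜ.indicator (0 : Ω → ℝ) ω)
      = A.indicator X := by
    funext ω; simp
  rw [heq] at this
  refine this.trans ?_
  filter_upwards [hnorm] with ω hω
  by_cases h : ω ∈ A <;> simp [Set.indicator_apply, h, hω]
end

section
/- A conditional deviation measure at time s is determined by its time-0 value through the recursive property: let 0 ≤ s ≤ T and let D_0 : L²(F_T) → ℝ and D_s, D'_s : L²(F_T) → L²(F_s) be maps such that both D_s and D'_s are local (D_s(1_A X) = 1_A D_s(X) a.s. and D'_s(1_A X) = 1_A D'_s(X) a.s. for all A ∈ F_s, X ∈ L²(F_T)) and both satisfy the recursion D_0(X) = D_0(E[X|F_s]) + E[D_s(X)] and D_0(X) = D_0(E[X|F_s]) + E[D'_s(X)] for all X ∈ L²(F_T), with D_s(X), D'_s(X) integrable. Then D_s(X) = D'_s(X) almost surely for every X ∈ L²(F_T). -/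
open MeasureTheory

/-- **A conditional deviation measure at time `s` is determined by its time-`0` value through
the recursive property.**  Here the ambient σ-algebra `m0` plays the role of `F_T` and
`Fs ≤ m0` is the σ-algebra `F_s`.  If `D_s, D'_s : L²(F_T) → L²(F_s)` are local and both
satisfy the recursion `D_0(X) = D_0(E[X|F_s]) + E[D_s(X)]` for the same `D_0`, then
`D_s(X) = D'_s(X)` a.s. for every square-integrable `X`. -/
theorem conditional_deviation_determined_by_time_zero {Ω : Type*} {m0 : MeasurableSpace Ω}
    (μ : Measure Ω) [IsProbabilityMeasure μ]
    (Fs : MeasurableSpace Ω) (hFs : Fs ≤ m0)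
    (D0 : (Ω → ℝ) → ℝ) (Ds Ds' : (Ω → ℝ) → Ω → ℝ)
    -- `Ds` and `Ds'` map `L²(F_T)` into `F_s`-measurable integrable random variables
    (hDsmap : ∀ X : Ω → ℝ, MemLp X 2 μ →
      StronglyMeasurable[Fs] (Ds X) ∧ Integrable (Ds X) μ)
    (hDs'map : ∀ X : Ω → ℝ, MemLp X 2 μ →
      StronglyMeasurable[Fs] (Ds' X) ∧ Integrable (Ds' X) μ)
    -- locality
    (hDsloc : ∀ A : Set Ω, MeasurableSet[Fs] A → ∀ X : Ω → ℝ, MemLp X 2 μ →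
      Ds (A.indicator X) =ᵐ[μ] A.indicator (Ds X))
    (hDs'loc : ∀ A : Set Ω, MeasurableSet[Fs] A → ∀ X : Ω → ℝ, MemLp X 2 μ →
      Ds' (A.indicator X) =ᵐ[μ] A.indicator (Ds' X))
    -- the recursive property for both `Ds` and `Ds'`
    (hDsrec : ∀ X : Ω → ℝ, MemLp X 2 μ →
      D0 X = D0 (μ[X|Fs]) + ∫ ω, Ds X ω ∂μ)
    (hDs'rec : ∀ X : Ω → ℝ, MemLp X 2 μ →
      D0 X = D0 (μ[X|Fs]) + ∫ ω, Ds' X ω ∂μ) :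
    ∀ X : Ω → ℝ, MemLp X 2 μ → Ds X =ᵐ[μ] Ds' X := by
  intro X hX
  obtain ⟨hfm, hfi⟩ := hDsmap X hX
  obtain ⟨hgm, hgi⟩ := hDs'map X hX
  have key : ∀ A : Set Ω, MeasurableSet[Fs] A →
      ∫ ω in A, Ds X ω ∂μ = ∫ ω in A, Ds' X ω ∂μ := by
    intro A hA
    have hXA : MemLp (A.indicator X) 2 μ := hX.indicator (hFs _ hA)
    have h1 := hDsrec _ hXA
    have h2 := hDs'rec _ hXA
    have h3 : ∫ ω, Ds (A.indicator X) ω ∂μ = ∫ ω, Ds' (A.indicator X) ω ∂μ := by linarith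
    have hAm : MeasurableSet[m0] A := hFs _ hA
    rw [integral_congr_ae (hDsloc A hA X hX), integral_congr_ae (hDs'loc A hA X hX)] at h3
    rw [@integral_indicator Ω ℝ m0 _ _ (Ds X) A μ hAm,
      @integral_indicator Ω ℝ m0 _ _ (Ds' X) A μ hAm] at h3
    exact h3
  rw [← StronglyMeasurable.ae_eq_trim_iff hFs hfm hgm]
  refine Integrable.ae_eq_of_forall_setIntegral_eq _ _ (hfi.trim hFs hfm) (hgi.trim hFs hgm) ?_
  intro s hs _
  rw [← setIntegral_trim hFs hfm hs, ← setIntegral_trim hFs hgm hs]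
  exact key s hs
end

section
/- Discrete-time synthesis of dynamic deviation measures (sufficiency direction of Proposition 1): let I = {t_0 < t_1 < ... < t_n} ⊆ [0,T] with t_n = T, and for each i let D̃_{t_i} : L²(F_T) → L²(F_{t_i}) be an F_{t_i}-conditional convex deviation measure (normalized, satisfying (D1) translation invariance by bounded F_{t_i}-measurable random variables, (D2) positivity with D̃_{t_i}(Y) = 0 a.s. iff Y is a.s. F_{t_i}-measurable, and (D3) conditional convexity). Define for t ∈ I and X ∈ L²(F_T): D_t(X) = E[ Σ_{i : t_i ≥ t, i < n} D̃_{t_i}( E[X|F_{t_{i+1}}] − E[X|F_{t_i}] ) | F_t ]. Then the family (D_t)_{t∈I} satisfies (D1), (D2), (D3), and the recursive property (D5): D_t(X) = D_t(E[X|F_s]) + E[D_s(X)|F_t] a.s. for all t, s ∈ I with t ≤ s. -/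
open MeasureTheory

/-- An `m`-conditional convex deviation measure on `L²` (the ambient σ-algebra plays the role
of `F_T`): a map `D` into `m`-measurable square-integrable random variables which is
normalized, translation invariant (D1), positive with the `m`-measurability characterization
of the kernel (D2), and conditionally convex (D3). -/
def IsCondDeviation {Ω : Type*} {m0 : MeasurableSpace Ω} (μ : Measure Ω)
    (m : MeasurableSpace Ω) (D : (Ω → ℝ) → Ω → ℝ) : Prop :=
  (∀ X : Ω → ℝ, MemLp X 2 μ → StronglyMeasurable[m] (D X) ∧ MemLp (D X) 2 μ) ∧
  -- normalization
  D 0 =ᵐ[μ] 0 ∧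
  -- (D1) translation invariance
  (∀ X : Ω → ℝ, MemLp X 2 μ → ∀ c : Ω → ℝ, Measurable[m] c → (∃ C : ℝ, ∀ ω, |c ω| ≤ C) →
    D (X + c) =ᵐ[μ] D X) ∧
  -- (D2) positivity
  (∀ X : Ω → ℝ, MemLp X 2 μ → (0 ≤ᵐ[μ] D X) ∧
    (D X =ᵐ[μ] 0 ↔ ∃ Y : Ω → ℝ, Measurable[m] Y ∧ X =ᵐ[μ] Y)) ∧
  -- (D3) conditional convexity
  (∀ X Y : Ω → ℝ, MemLp X 2 μ → MemLp Y 2 μ →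
    ∀ lam : Ω → ℝ, Measurable[m] lam → (∀ ω, 0 ≤ lam ω) → (∀ ω, lam ω ≤ 1) →
    D (fun ω => lam ω * X ω + (1 - lam ω) * Y ω) ≤ᵐ[μ]
      fun ω => lam ω * D X ω + (1 - lam ω) * D Y ω)

open Filter

section Helpers

variable {Ω : Type*} {m0 : MeasurableSpace Ω} {μ : Measure Ω}

/-- a.e. congruence of finite sums -/
lemma ae_sum_congr {ι : Type*} (s : Finset ι) {f h : ι → Ω → ℝ}
    (H : ∀ k ∈ s, f k =ᵐ[μ] h k) :
    (fun ω => ∑ k ∈ s, f k ω) =ᵐ[μ] fun ω => ∑ k ∈ s, h k ω := by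
  have := (ae_ball_iff s.countable_toSet).2 H
  filter_upwards [this] with ω hω
  exact Finset.sum_congr rfl hω

end Helpers

section Helpers2

/-- conditional expectation of an `L²` function is in `L²`. -/
lemma memLp_two_condExp {Ω : Type*} {m m0 : MeasurableSpace Ω} {μ : Measure Ω}
    [IsFiniteMeasure μ] (hm : m ≤ m0)
    {f : Ω → ℝ} (hf : MemLp f 2 μ) : MemLp (μ[f|m]) 2 μ := by
  have hfi : Integrable f μ := hf.integrable one_le_two
  set fL : Lp ℝ 2 μ := hf.toLp f with hfL
  set gL : lpMeas ℝ ℝ m 2 μ := condExpL2 ℝ ℝ hm fL with hgL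
  have hg : ((gL : Lp ℝ 2 μ) : Ω → ℝ) =ᵐ[μ] μ[f|m] := by
    refine ae_eq_condExp_of_forall_setIntegral_eq hm hfi
      (fun s _ _ => ((Lp.memLp _).integrable one_le_two).integrableOn)
      (fun s hs hμs => ?_) ?_
    · calc ∫ x in s, (gL : Lp ℝ 2 μ) x ∂μ = ∫ x in s, fL x ∂μ := by
            rw [hgL]; exact integral_condExpL2_eq hm fL hs hμs.ne
      _ = ∫ x in s, f x ∂μ := integral_congr_ae (ae_restrict_of_ae hf.coeFn_toLp)
    · exact lpMeas.aestronglyMeasurable gL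
  exact (Lp.memLp _).ae_eq hg

variable {Ω : Type*} {m0 : MeasurableSpace Ω} {μ : Measure Ω}
variable {m : MeasurableSpace Ω} {D : (Ω → ℝ) → Ω → ℝ}

lemma IsCondDeviation.le_congr (hD : IsCondDeviation μ m D)
    {A B : Ω → ℝ} (hA : MemLp A 2 μ) (hB : MemLp B 2 μ) (hAB : A =ᵐ[μ] B) :
    D B ≤ᵐ[μ] D A := by
  obtain ⟨hmeas, hnorm, hD1, hD2, hD3⟩ := hD
  have hA2 : MemLp (fun ω' => 2 * A ω') 2 μ := hA.const_mul 2
  have key : ∀ θ : ℝ, 1/2 < θ → θ < 1 →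
      D B ≤ᵐ[μ] fun ω => (2*θ - 1) * D A ω + (1 - θ) * D (fun ω' => 2 * A ω') ω := by
    intro θ hθ1 hθ2
    have hθ0 : (0:ℝ) < θ := by linarith
    have hθ0' : θ ≠ 0 := ne_of_gt hθ0
    have hθc : (0:ℝ) < 1 - θ := by linarith
    have hθc' : (1:ℝ) - θ ≠ 0 := ne_of_gt hθc
    have hmul : θ * θ⁻¹ = 1 := mul_inv_cancel₀ hθ0'
    have hinv2 : θ⁻¹ < 2 := by
      nlinarith [hmul]
    have hinv1 : 1 < θ⁻¹ := by
      nlinarith [hmul]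
    have hZ : MemLp (fun ω => θ⁻¹ * A ω) 2 μ := hA.const_mul _
    have hW : MemLp (fun ω => (1-θ)⁻¹ * (B ω - A ω)) 2 μ := (hB.sub hA).const_mul _
    -- Step A
    have hstepA : D B ≤ᵐ[μ]
        fun ω => θ * D (fun ω' => θ⁻¹ * A ω') ω
          + (1 - θ) * D (fun ω' => (1-θ)⁻¹ * (B ω' - A ω')) ω := by
      have h3 := hD3 _ _ hZ hW (fun _ => θ) measurable_const
        (fun _ => hθ0.le) (fun _ => hθ2.le)
      have heq : (fun ω => (fun _ : Ω => θ) ω * ((fun ω' => θ⁻¹ * A ω') ω)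
          + (1 - (fun _ : Ω => θ) ω) * ((fun ω' => (1-θ)⁻¹ * (B ω' - A ω')) ω)) = B := by
        funext ω
        field_simp
        ring
      rw [heq] at h3
      exact h3
    -- Step B
    have hWzero : D (fun ω' => (1-θ)⁻¹ * (B ω' - A ω')) =ᵐ[μ] 0 := by
      refine (hD2 _ hW).2.mpr ⟨0, measurable_const, ?_⟩
      filter_upwards [hAB] with ω h
      simp [h]
    -- Step C
    have hstepC : D (fun ω' => θ⁻¹ * A ω') ≤ᵐ[μ]
        fun ω => (2 - θ⁻¹) * D A ω + (1 - (2 - θ⁻¹)) * D (fun ω' => 2 * A ω') ω := by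
      have h3 := hD3 A _ hA hA2 (fun _ => (2 - θ⁻¹)) measurable_const
        (fun _ => by linarith) (fun _ => by linarith)
      have heq : (fun ω => (fun _ : Ω => (2 - θ⁻¹)) ω * A ω
          + (1 - (fun _ : Ω => (2 - θ⁻¹)) ω) * ((fun ω' => 2 * A ω') ω))
          = fun ω' => θ⁻¹ * A ω' := by
        funext ω; ring
      rw [heq] at h3
      exact h3
    filter_upwards [hstepA, hWzero, hstepC] with ω h1 h2 h3
    have h2' : D (fun ω' => (1-θ)⁻¹ * (B ω' - A ω')) ω = 0 := h2
    have : θ * D (fun ω' => θ⁻¹ * A ω') ω ≤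
        θ * ((2 - θ⁻¹) * D A ω + (1 - (2 - θ⁻¹)) * D (fun ω' => 2 * A ω') ω) :=
      mul_le_mul_of_nonneg_left h3 hθ0.le
    have hcalc : θ * ((2 - θ⁻¹) * D A ω + (1 - (2 - θ⁻¹)) * D (fun ω' => 2 * A ω') ω)
        = (2*θ - 1) * D A ω + (1 - θ) * D (fun ω' => 2 * A ω') ω := by
      linear_combination (D (fun ω' => 2 * A ω') ω - D A ω) * hmul
    calc D B ω ≤ θ * D (fun ω' => θ⁻¹ * A ω') ω
        + (1 - θ) * D (fun ω' => (1-θ)⁻¹ * (B ω' - A ω')) ω := h1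
      _ = θ * D (fun ω' => θ⁻¹ * A ω') ω := by rw [h2']; ring
      _ ≤ θ * ((2 - θ⁻¹) * D A ω + (1 - (2 - θ⁻¹)) * D (fun ω' => 2 * A ω') ω) := this
      _ = (2*θ - 1) * D A ω + (1 - θ) * D (fun ω' => 2 * A ω') ω := hcalc
  -- pass to the limit θ → 1
  have hseq : ∀ᵐ ω ∂μ, ∀ k : ℕ,
      D B ω ≤ (2*(1 - ((k:ℝ)+3)⁻¹) - 1) * D A ω
        + (1 - (1 - ((k:ℝ)+3)⁻¹)) * D (fun ω' => 2 * A ω') ω := by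
    rw [ae_all_iff]
    intro k
    refine key _ ?_ ?_
    · have h3 : (0:ℝ) < (k:ℝ) + 3 := by positivity
      have : ((k:ℝ)+3)⁻¹ ≤ 3⁻¹ := by
        apply inv_anti₀ (by norm_num)
        have : (0:ℝ) ≤ (k:ℝ) := Nat.cast_nonneg k
        linarith
      have h0 : (0:ℝ) < ((k:ℝ)+3)⁻¹ := by positivity
      linarith
    · have h0 : (0:ℝ) < ((k:ℝ)+3)⁻¹ := by positivity
      linarith
  filter_upwards [hseq] with ω hω
  have htend : Tendsto (fun k : ℕ => (2*(1 - ((k:ℝ)+3)⁻¹) - 1) * D A ω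
      + (1 - (1 - ((k:ℝ)+3)⁻¹)) * D (fun ω' => 2 * A ω') ω) atTop
      (nhds ((2*(1 - 0) - 1) * D A ω + (1 - (1 - 0)) * D (fun ω' => 2 * A ω') ω)) := by
    have h0 : Tendsto (fun k : ℕ => ((k:ℝ)+3)⁻¹) atTop (nhds 0) :=
      Tendsto.inv_tendsto_atTop (tendsto_atTop_add_const_right _ 3 tendsto_natCast_atTop_atTop)
    have h1 : Tendsto (fun k : ℕ => 1 - ((k:ℝ)+3)⁻¹) atTop (nhds (1 - 0)) :=
      tendsto_const_nhds.sub h0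
    exact (((h1.const_mul 2).sub_const 1).mul_const _).add
      ((tendsto_const_nhds.sub h1).mul_const _)
  have : (2*(1 - (0:ℝ)) - 1) * D A ω + (1 - (1 - 0)) * D (fun ω' => 2 * A ω') ω = D A ω := by
    norm_num
  rw [this] at htend
  exact ge_of_tendsto htend (Eventually.of_forall hω)

lemma IsCondDeviation.congr (hD : IsCondDeviation μ m D)
    {A B : Ω → ℝ} (hA : MemLp A 2 μ) (hB : MemLp B 2 μ) (hAB : A =ᵐ[μ] B) :
    D A =ᵐ[μ] D B :=
  (hD.le_congr hB hA hAB.symm).antisymm (hD.le_congr hA hB hAB)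

end Helpers2

noncomputable def Gfun {Ω : Type*} [MeasurableSpace Ω] (μ : Measure Ω) {n : ℕ}
    (t : Fin (n + 1) → ℝ) (F : ℝ → MeasurableSpace Ω) (k : Fin n) (X : Ω → ℝ) : Ω → ℝ :=
  fun ω' => (μ[X|F (t k.succ)]) ω' - (μ[X|F (t k.castSucc)]) ω'

noncomputable def Sfun {Ω : Type*} [MeasurableSpace Ω] (μ : Measure Ω) {n : ℕ}
    (t : Fin (n + 1) → ℝ) (F : ℝ → MeasurableSpace Ω)
    (Dtil : Fin (n + 1) → (Ω → ℝ) → Ω → ℝ) (i : Fin (n + 1)) (X : Ω → ℝ) : Ω → ℝ :=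
  fun ω => ∑ j ∈ Finset.univ.filter (fun j : Fin n => i ≤ j.castSucc),
    Dtil j.castSucc (Gfun μ t F j X) ω


/-- **Discrete-time synthesis of dynamic deviation measures (sufficiency direction of
Proposition 1).**  Let `I = {t_0 < … < t_n} ⊆ [0,T]` with `t_n = T`, `F_T` the ambient
σ-algebra, and let `D̃_{t_i}` be `F_{t_i}`-conditional convex deviation measures.  Then the
family `D_{t_i}(X) = E[ Σ_{j ≥ i} D̃_{t_j}(E[X|F_{t_{j+1}}] − E[X|F_{t_j}]) | F_{t_i} ]`
satisfies (D1), (D2), (D3) and the recursive property (D5). -/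
theorem discrete_synthesis_dynamicDeviation {Ω : Type*} {m0 : MeasurableSpace Ω}
    (μ : Measure Ω) [IsProbabilityMeasure μ] (T : ℝ) (n : ℕ)
    (t : Fin (n + 1) → ℝ) (htmono : StrictMono t) (ht0 : 0 ≤ t 0) (htn : t (Fin.last n) = T)
    (F : ℝ → MeasurableSpace Ω) (hFmono : Monotone F) (hFle : ∀ s, F s ≤ m0)
    (hFT : F T = m0)
    (Dtil : Fin (n + 1) → (Ω → ℝ) → Ω → ℝ)
    (hDtil : ∀ i, IsCondDeviation μ (F (t i)) (Dtil i))
    (D : Fin (n + 1) → (Ω → ℝ) → Ω → ℝ)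
    (hDdef : ∀ i (X : Ω → ℝ), D i X =
      μ[fun ω => ∑ j ∈ Finset.univ.filter (fun j : Fin n => i ≤ j.castSucc),
          Dtil j.castSucc
            (fun ω' => (μ[X|F (t j.succ)]) ω' - (μ[X|F (t j.castSucc)]) ω') ω
        | F (t i)]) :
    (∀ i, IsCondDeviation μ (F (t i)) (D i)) ∧
    -- (D5) recursive property
    (∀ i j : Fin (n + 1), i ≤ j → ∀ X : Ω → ℝ, MemLp X 2 μ →
      D i X =ᵐ[μ] D i (μ[X|F (t j)]) + μ[D j X|F (t i)]) := by
  classical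
  have hle : ∀ i : Fin (n+1), F (t i) ≤ m0 := fun i => hFle _
  have hFm : ∀ {i j : Fin (n+1)}, i ≤ j → F (t i) ≤ F (t j) :=
    fun h => hFmono (htmono.monotone h)
  have hD' : ∀ i X, D i X = μ[Sfun μ t F Dtil i X|F (t i)] := hDdef
  have hGmem : ∀ (k : Fin n) (X : Ω → ℝ), MemLp X 2 μ → MemLp (Gfun μ t F k X) 2 μ :=
    fun k X hX =>
      (memLp_two_condExp (hle k.succ) hX).sub (memLp_two_condExp (hle k.castSucc) hX)
  have hTmem : ∀ (k : Fin n) (X : Ω → ℝ), MemLp X 2 μ →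
      MemLp (Dtil k.castSucc (Gfun μ t F k X)) 2 μ :=
    fun k X hX => ((hDtil k.castSucc).1 _ (hGmem k X hX)).2
  have hTnn : ∀ (k : Fin n) (X : Ω → ℝ), MemLp X 2 μ →
      0 ≤ᵐ[μ] Dtil k.castSucc (Gfun μ t F k X) :=
    fun k X hX => ((hDtil k.castSucc).2.2.2.1 _ (hGmem k X hX)).1
  have hSmem : ∀ (i : Fin (n+1)) (X : Ω → ℝ), MemLp X 2 μ →
      MemLp (Sfun μ t F Dtil i X) 2 μ :=
    fun i X hX => memLp_finset_sum _ (fun k _ => hTmem k X hX)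
  have hSint : ∀ (i : Fin (n+1)) (X : Ω → ℝ), MemLp X 2 μ →
      Integrable (Sfun μ t F Dtil i X) μ :=
    fun i X hX => (hSmem i X hX).integrable one_le_two
  have hSnn : ∀ (i : Fin (n+1)) (X : Ω → ℝ), MemLp X 2 μ →
      0 ≤ᵐ[μ] Sfun μ t F Dtil i X := by
    intro i X hX
    have hball := (ae_ball_iff
      (Finset.univ.filter (fun k : Fin n => i ≤ k.castSucc)).countable_toSet).2
      (fun k _ => hTnn k X hX)
    filter_upwards [hball] with ω hω
    exact Finset.sum_nonneg hω
  -- term vanishes a.e. when X is a.e. measurable with respect to an earlier σ-algebra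
  have hTzero : ∀ (k : Fin n) (X : Ω → ℝ), MemLp X 2 μ → ∀ (i : Fin (n+1)), i ≤ k.castSucc →
      ∀ Y : Ω → ℝ, Measurable[F (t i)] Y → X =ᵐ[μ] Y →
      Dtil k.castSucc (Gfun μ t F k X) =ᵐ[μ] 0 := by
    intro k X hX i hik Y hYm hXY
    have hYint : Integrable Y μ := (hX.integrable one_le_two).congr hXY
    have e1 : μ[X|F (t k.succ)] =ᵐ[μ] Y := by
      refine (condExp_congr_ae hXY).trans ?_
      rw [condExp_of_stronglyMeasurable (hle k.succ)
        ((hYm.mono (hFm (hik.trans (Fin.castSucc_le_succ k))) le_rfl).stronglyMeasurable) hYint]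
    have e2 : μ[X|F (t k.castSucc)] =ᵐ[μ] Y := by
      refine (condExp_congr_ae hXY).trans ?_
      rw [condExp_of_stronglyMeasurable (hle k.castSucc)
        ((hYm.mono (hFm hik) le_rfl).stronglyMeasurable) hYint]
    have hGz : Gfun μ t F k X =ᵐ[μ] (0 : Ω → ℝ) := by
      filter_upwards [e1, e2] with ω a1 a2
      simp [Gfun, a1, a2]
    exact ((hDtil k.castSucc).congr (hGmem k X hX) MemLp.zero hGz).trans (hDtil k.castSucc).2.1
  constructor
  · -- each D i is a conditional deviation measure
    intro i
    refine ⟨?_, ?_, ?_, ?_, ?_⟩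
    · -- measurability and L²
      intro X hX
      rw [hD']
      exact ⟨stronglyMeasurable_condExp, memLp_two_condExp (hle i) (hSmem i X hX)⟩
    · -- normalization
      rw [hD' i 0]
      have hz : Sfun μ t F Dtil i (0 : Ω → ℝ) =ᵐ[μ] (0 : Ω → ℝ) := by
        have hG0 : ∀ k : Fin n, Gfun μ t F k (0 : Ω → ℝ) = 0 := by
          intro k; funext ω'; simp [Gfun, condExp_zero]
        have h := ae_sum_congr (μ := μ)
          (Finset.univ.filter (fun j : Fin n => i ≤ j.castSucc))
          (f := fun k : Fin n => Dtil k.castSucc (Gfun μ t F k (0 : Ω → ℝ)))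
          (h := fun _ => (0 : Ω → ℝ))
          (fun k _ => by
            show Dtil k.castSucc (Gfun μ t F k (0 : Ω → ℝ)) =ᵐ[μ] (0 : Ω → ℝ)
            rw [hG0 k]
            exact (hDtil k.castSucc).2.1)
        refine h.trans ?_
        filter_upwards with ω
        simp
      exact (condExp_congr_ae hz).trans (by rw [condExp_zero])
    · -- (D1)
      rintro X hX c hc ⟨C, hC⟩
      have hcm0 : Measurable c := hc.mono (hle i) le_rfl
      have hcint : Integrable c μ := by
        refine (integrable_const C).mono' hcm0.aestronglyMeasurable ?_
        filter_upwards with ω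
        simpa [Real.norm_eq_abs] using hC ω
      have hcmem : MemLp c 2 μ := by
        refine (memLp_const (p := 2) (μ := μ) C).of_le hcm0.aestronglyMeasurable ?_
        filter_upwards with ω
        rw [Real.norm_eq_abs, Real.norm_eq_abs]
        exact (hC ω).trans (le_abs_self C)
      have hXc : MemLp (X + c) 2 μ := hX.add hcmem
      have hXint := hX.integrable one_le_two
      have hGc : ∀ k : Fin n, i ≤ k.castSucc →
          Gfun μ t F k (X + c) =ᵐ[μ] Gfun μ t F k X := by
        intro k hik
        have e : ∀ (m' : MeasurableSpace Ω) (hm' : m' ≤ m0), F (t i) ≤ m' →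
            μ[X + c|m'] =ᵐ[μ] μ[X|m'] + c := by
          intro m' hm' hFi
          have hcc : μ[c|m'] = c := condExp_of_stronglyMeasurable hm'
            ((hc.mono hFi le_rfl).stronglyMeasurable) hcint
          exact (condExp_add hXint hcint m').trans (by rw [hcc])
        have e1 := e (F (t k.succ)) (hle k.succ) (hFm (hik.trans (Fin.castSucc_le_succ k)))
        have e2 := e (F (t k.castSucc)) (hle k.castSucc) (hFm hik)
        filter_upwards [e1, e2] with ω a1 a2
        simp only [Gfun]
        rw [a1, a2]
        simp
      rw [hD' i (X + c), hD' i X]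
      refine condExp_congr_ae (ae_sum_congr _ ?_)
      intro k hk
      exact (hDtil k.castSucc).congr (hGmem k _ hXc) (hGmem k X hX)
        (hGc k (Finset.mem_filter.mp hk).2)
    · -- (D2)
      intro X hX
      refine ⟨?_, ?_, ?_⟩
      · rw [hD']
        exact condExp_nonneg (hSnn i X hX)
      · -- forward direction
        intro h0
        rw [hD'] at h0
        have hint0 : ∫ ω, Sfun μ t F Dtil i X ω ∂μ = 0 := by
          rw [← integral_condExp (hle i) (f := Sfun μ t F Dtil i X), integral_congr_ae h0]
          simp
        have hS0 : Sfun μ t F Dtil i X =ᵐ[μ] 0 :=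
          (integral_eq_zero_iff_of_nonneg_ae (hSnn i X hX) (hSint i X hX)).1 hint0
        have hterm0 : ∀ k : Fin n, i ≤ k.castSucc →
            Dtil k.castSucc (Gfun μ t F k X) =ᵐ[μ] 0 := by
          intro k hik
          have hball := (ae_ball_iff
            (Finset.univ.filter (fun k' : Fin n => i ≤ k'.castSucc)).countable_toSet).2
            (fun k' _ => hTnn k' X hX)
          filter_upwards [hS0, hball] with ω h1 h2
          exact (Finset.sum_eq_zero_iff_of_nonneg h2).1 h1 k
            (Finset.mem_filter.mpr ⟨Finset.mem_univ _, hik⟩)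
        have hstep : ∀ k : Fin n, i ≤ k.castSucc →
            μ[X|F (t k.succ)] =ᵐ[μ] μ[X|F (t k.castSucc)] := by
          intro k hik
          obtain ⟨Yk, hYkm, hGYk⟩ :=
            ((hDtil k.castSucc).2.2.2.1 _ (hGmem k X hX)).2.1 (hterm0 k hik)
          have hGint : Integrable (Gfun μ t F k X) μ := (hGmem k X hX).integrable one_le_two
          have hYkint : Integrable Yk μ := hGint.congr hGYk
          have eYk : μ[Gfun μ t F k X|F (t k.castSucc)] =ᵐ[μ] Yk := by
            refine (condExp_congr_ae hGYk).trans ?_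
            rw [condExp_of_stronglyMeasurable (hle k.castSucc) hYkm.stronglyMeasurable hYkint]
          have e0 : μ[Gfun μ t F k X|F (t k.castSucc)] =ᵐ[μ] 0 := by
            have hsub : μ[Gfun μ t F k X|F (t k.castSucc)] =ᵐ[μ]
                μ[μ[X|F (t k.succ)]|F (t k.castSucc)] -
                  μ[μ[X|F (t k.castSucc)]|F (t k.castSucc)] :=
              condExp_sub integrable_condExp integrable_condExp _
            have t1 : μ[μ[X|F (t k.succ)]|F (t k.castSucc)] =ᵐ[μ] μ[X|F (t k.castSucc)] :=
              condExp_condExp_of_le (hFm (Fin.castSucc_le_succ k)) (hle k.succ)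
            have t2 : μ[μ[X|F (t k.castSucc)]|F (t k.castSucc)] = μ[X|F (t k.castSucc)] :=
              condExp_of_stronglyMeasurable (hle k.castSucc) stronglyMeasurable_condExp
                integrable_condExp
            filter_upwards [hsub, t1] with ω b1 b2
            rw [t2] at b1
            simp only [Pi.sub_apply] at b1
            simp only [Pi.zero_apply]
            rw [b1, b2]
            ring
          have hYk0 : Yk =ᵐ[μ] 0 := eYk.symm.trans e0
          have hG0' : Gfun μ t F k X =ᵐ[μ] 0 := hGYk.trans hYk0
          filter_upwards [hG0'] with ω hω
          have hω' : (μ[X|F (t k.succ)]) ω - (μ[X|F (t k.castSucc)]) ω = 0 := hω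
          linarith
        have hchain : ∀ k : Fin (n+1), i ≤ k → μ[X|F (t k)] =ᵐ[μ] μ[X|F (t i)] := by
          intro k
          induction k using Fin.induction with
          | zero =>
            intro h
            have : i = 0 := Fin.le_zero_iff.1 h
            rw [this]
          | succ k ih =>
            intro h
            by_cases hik : i ≤ k.castSucc
            · exact (hstep k hik).trans (ih hik)
            · have hik' : i = k.succ :=
                le_antisymm h (Fin.castSucc_lt_iff_succ_le.1 (lt_of_not_ge hik))
              rw [hik']
        have hXae : X =ᵐ[μ] μ[X|F (t i)] := by
          have hlast := hchain (Fin.last n) (Fin.le_last i)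
          rw [htn, hFT] at hlast
          have hm0 : μ[X|m0] =ᵐ[μ] X := by
            obtain ⟨Z, hZsm, hZae⟩ := hX.aestronglyMeasurable
            exact condExp_of_aestronglyMeasurable' le_rfl ⟨Z, hZsm, hZae⟩
              (hX.integrable one_le_two)
          exact (hm0.symm.trans hlast)
        exact ⟨μ[X|F (t i)], stronglyMeasurable_condExp.measurable, hXae⟩
      · -- backward direction
        rintro ⟨Y, hYm, hXY⟩
        rw [hD' i X]
        have hz : Sfun μ t F Dtil i X =ᵐ[μ] (0 : Ω → ℝ) := by
          have h := ae_sum_congr (μ := μ)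
            (Finset.univ.filter (fun j : Fin n => i ≤ j.castSucc))
            (f := fun k : Fin n => Dtil k.castSucc (Gfun μ t F k X))
            (h := fun _ => (0 : Ω → ℝ))
            (fun k hk => hTzero k X hX i (Finset.mem_filter.mp hk).2 Y hYm hXY)
          refine h.trans ?_
          filter_upwards with ω
          simp
        exact (condExp_congr_ae hz).trans (by rw [condExp_zero])
    · -- (D3)
      intro X Y hX hY lam hlam hl0 hl1
      have hlamm0 : Measurable lam := hlam.mono (hle i) le_rfl
      have hlamabs : ∀ ω, |lam ω| ≤ 1 := fun ω => abs_le.2 ⟨by linarith [hl0 ω], hl1 ω⟩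
      have hlamabs' : ∀ ω, |1 - lam ω| ≤ 1 := fun ω =>
        abs_le.2 ⟨by linarith [hl1 ω], by linarith [hl0 ω]⟩
      have hbddmul : ∀ (e : Ω → ℝ), Measurable e → (∀ ω, |e ω| ≤ 1) →
          ∀ (U : Ω → ℝ), MemLp U 2 μ → MemLp (fun ω => e ω * U ω) 2 μ := by
        intro e he hebd U hU
        refine MemLp.of_le hU (he.aestronglyMeasurable.mul hU.aestronglyMeasurable) ?_
        filter_upwards with ω
        rw [Real.norm_eq_abs, Real.norm_eq_abs, abs_mul]
        exact mul_le_of_le_one_left (abs_nonneg _) (hebd ω)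
      have hmixmem : ∀ (U V : Ω → ℝ), MemLp U 2 μ → MemLp V 2 μ →
          MemLp (fun ω => lam ω * U ω + (1 - lam ω) * V ω) 2 μ := by
        intro U V hU hV
        exact (hbddmul lam hlamm0 hlamabs U hU).add
          (hbddmul _ (measurable_const.sub hlamm0) hlamabs' V hV)
      have hpull : ∀ (m' : MeasurableSpace Ω) (hm' : m' ≤ m0), F (t i) ≤ m' →
          ∀ (U V : Ω → ℝ), MemLp U 2 μ → MemLp V 2 μ →
          μ[(fun ω => lam ω * U ω + (1 - lam ω) * V ω)|m'] =ᵐ[μ]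
            fun ω => lam ω * (μ[U|m']) ω + (1 - lam ω) * (μ[V|m']) ω := by
        intro m' hm' hiF U V hU hV
        have hUint := hU.integrable one_le_two
        have hVint := hV.integrable one_le_two
        have hlam' : StronglyMeasurable[m'] lam := (hlam.mono hiF le_rfl).stronglyMeasurable
        have hlam'' : StronglyMeasurable[m'] (fun ω => 1 - lam ω) :=
          stronglyMeasurable_const.sub hlam'
        have int1 : Integrable (fun ω => lam ω * U ω) μ :=
          (hbddmul lam hlamm0 hlamabs U hU).integrable one_le_two
        have int2 : Integrable (fun ω => (1 - lam ω) * V ω) μ :=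
          (hbddmul _ (measurable_const.sub hlamm0) hlamabs' V hV).integrable one_le_two
        have q1 : μ[(fun ω => lam ω * U ω)|m'] =ᵐ[μ] fun ω => lam ω * (μ[U|m']) ω :=
          condExp_mul_of_stronglyMeasurable_left hlam' int1 hUint
        have q2 : μ[(fun ω => (1 - lam ω) * V ω)|m'] =ᵐ[μ]
            fun ω => (1 - lam ω) * (μ[V|m']) ω :=
          condExp_mul_of_stronglyMeasurable_left hlam'' int2 hVint
        exact (condExp_add int1 int2 m').trans (q1.add q2)
      have hterm : ∀ k : Fin n, i ≤ k.castSucc →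
          Dtil k.castSucc (Gfun μ t F k (fun ω => lam ω * X ω + (1 - lam ω) * Y ω)) ≤ᵐ[μ]
            fun ω => lam ω * Dtil k.castSucc (Gfun μ t F k X) ω
              + (1 - lam ω) * Dtil k.castSucc (Gfun μ t F k Y) ω := by
        intro k hik
        have e1 := hpull (F (t k.succ)) (hle k.succ)
          (hFm (hik.trans (Fin.castSucc_le_succ k))) X Y hX hY
        have e2 := hpull (F (t k.castSucc)) (hle k.castSucc) (hFm hik) X Y hX hY
        have hGcong : Gfun μ t F k (fun ω => lam ω * X ω + (1 - lam ω) * Y ω) =ᵐ[μ]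
            fun ω => lam ω * Gfun μ t F k X ω + (1 - lam ω) * Gfun μ t F k Y ω := by
          filter_upwards [e1, e2] with ω a1 a2
          simp only [Gfun]
          rw [a1, a2]
          ring
        have hGmix : MemLp (fun ω => lam ω * Gfun μ t F k X ω
            + (1 - lam ω) * Gfun μ t F k Y ω) 2 μ :=
          hmixmem _ _ (hGmem k X hX) (hGmem k Y hY)
        have hc := (hDtil k.castSucc).congr (hGmem k _ (hmixmem X Y hX hY)) hGmix hGcong
        have h3 := (hDtil k.castSucc).2.2.2.2 _ _ (hGmem k X hX) (hGmem k Y hY) lam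
          (hlam.mono (hFm hik) le_rfl) hl0 hl1
        exact hc.le.trans h3
      have hSle : Sfun μ t F Dtil i (fun ω => lam ω * X ω + (1 - lam ω) * Y ω) ≤ᵐ[μ]
          fun ω => lam ω * Sfun μ t F Dtil i X ω + (1 - lam ω) * Sfun μ t F Dtil i Y ω := by
        have hball := (ae_ball_iff
          (Finset.univ.filter (fun k : Fin n => i ≤ k.castSucc)).countable_toSet).2
          (fun k hk => hterm k (Finset.mem_filter.mp hk).2)
        filter_upwards [hball] with ω hω
        have hle1 : Sfun μ t F Dtil i (fun ω' => lam ω' * X ω' + (1 - lam ω') * Y ω') ω ≤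
            ∑ k ∈ Finset.univ.filter (fun k : Fin n => i ≤ k.castSucc),
              (lam ω * Dtil k.castSucc (Gfun μ t F k X) ω
                + (1 - lam ω) * Dtil k.castSucc (Gfun μ t F k Y) ω) :=
          Finset.sum_le_sum hω
        refine hle1.trans (le_of_eq ?_)
        rw [Finset.sum_add_distrib, ← Finset.mul_sum, ← Finset.mul_sum]
        rfl
      rw [hD' i (fun ω => lam ω * X ω + (1 - lam ω) * Y ω), hD' i X, hD' i Y]
      have int1 : Integrable (Sfun μ t F Dtil i
          (fun ω => lam ω * X ω + (1 - lam ω) * Y ω)) μ :=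
        hSint _ _ (hmixmem X Y hX hY)
      have int2 : Integrable (fun ω => lam ω * Sfun μ t F Dtil i X ω
          + (1 - lam ω) * Sfun μ t F Dtil i Y ω) μ :=
        (hmixmem _ _ (hSmem i X hX) (hSmem i Y hY)).integrable one_le_two
      exact (condExp_mono int1 int2 hSle).trans
        (hpull (F (t i)) (hle i) le_rfl _ _ (hSmem i X hX) (hSmem i Y hY)).le
  · -- (D5)
    intro i j hij X hX
    have hX'mem : MemLp (μ[X|F (t j)]) 2 μ := memLp_two_condExp (hle j) hX
    set Af := Finset.univ.filter (fun k : Fin n => i ≤ k.castSucc) with hAfdef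
    have hfilter : Af.filter (fun k : Fin n => j ≤ k.castSucc)
        = Finset.univ.filter (fun k : Fin n => j ≤ k.castSucc) := by
      rw [hAfdef, Finset.filter_filter]
      ext k
      simp only [Finset.mem_filter, Finset.mem_univ, true_and]
      exact ⟨fun h => h.2, fun h => ⟨hij.trans h, h⟩⟩
    have intP : Integrable (fun ω => ∑ k ∈ Af.filter
        (fun k : Fin n => ¬ j ≤ k.castSucc), Dtil k.castSucc (Gfun μ t F k X) ω) μ :=
      (memLp_finset_sum _ (fun k _ => hTmem k X hX)).integrable one_le_two
    have intQ : Integrable (fun ω => ∑ k ∈ Af.filter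
        (fun k : Fin n => j ≤ k.castSucc), Dtil k.castSucc (Gfun μ t F k X) ω) μ :=
      (memLp_finset_sum _ (fun k _ => hTmem k X hX)).integrable one_le_two
    have hsplit : Sfun μ t F Dtil i X = (fun ω => ∑ k ∈ Af.filter
          (fun k : Fin n => ¬ j ≤ k.castSucc), Dtil k.castSucc (Gfun μ t F k X) ω)
        + (fun ω => ∑ k ∈ Af.filter
          (fun k : Fin n => j ≤ k.castSucc), Dtil k.castSucc (Gfun μ t F k X) ω) := by
      funext ω
      simp only [Sfun, Pi.add_apply]
      exact ((Finset.sum_filter_add_sum_filter_not Af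
        (fun k : Fin n => j ≤ k.castSucc) _).symm.trans (add_comm _ _))
    have c1 : D i X =ᵐ[μ] μ[fun ω => ∑ k ∈ Af.filter
          (fun k : Fin n => ¬ j ≤ k.castSucc), Dtil k.castSucc (Gfun μ t F k X) ω|F (t i)]
        + μ[fun ω => ∑ k ∈ Af.filter
          (fun k : Fin n => j ≤ k.castSucc), Dtil k.castSucc (Gfun μ t F k X) ω|F (t i)] := by
      rw [hD' i X, hsplit]
      exact condExp_add intP intQ _
    have c2 : μ[fun ω => ∑ k ∈ Af.filter
          (fun k : Fin n => j ≤ k.castSucc), Dtil k.castSucc (Gfun μ t F k X) ω|F (t i)]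
        =ᵐ[μ] μ[D j X|F (t i)] := by
      have hQ : (fun ω => ∑ k ∈ Af.filter
          (fun k : Fin n => j ≤ k.castSucc), Dtil k.castSucc (Gfun μ t F k X) ω)
          = Sfun μ t F Dtil j X := by
        funext ω
        exact Finset.sum_congr hfilter (fun _ _ => rfl)
      rw [hQ, hD' j X]
      exact (condExp_condExp_of_le (hFm hij) (hle j)).symm
    have c3 : μ[fun ω => ∑ k ∈ Af.filter
          (fun k : Fin n => ¬ j ≤ k.castSucc), Dtil k.castSucc (Gfun μ t F k X) ω|F (t i)]
        =ᵐ[μ] D i (μ[X|F (t j)]) := by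
      rw [hD' i (μ[X|F (t j)])]
      refine (condExp_congr_ae ?_).symm
      -- Sfun i X' =ᵐ P
      have hX'cond : ∀ k : Fin n, ¬ j ≤ k.castSucc →
          Dtil k.castSucc (Gfun μ t F k (μ[X|F (t j)])) =ᵐ[μ]
            Dtil k.castSucc (Gfun μ t F k X) := by
        intro k hkj
        have hkj' : k.succ ≤ j := Fin.castSucc_lt_iff_succ_le.1 (lt_of_not_ge hkj)
        have e1 : μ[μ[X|F (t j)]|F (t k.succ)] =ᵐ[μ] μ[X|F (t k.succ)] :=
          condExp_condExp_of_le (hFm hkj') (hle j)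
        have e2 : μ[μ[X|F (t j)]|F (t k.castSucc)] =ᵐ[μ] μ[X|F (t k.castSucc)] :=
          condExp_condExp_of_le (hFm ((Fin.castSucc_le_succ k).trans hkj')) (hle j)
        have hGcong : Gfun μ t F k (μ[X|F (t j)]) =ᵐ[μ] Gfun μ t F k X := by
          filter_upwards [e1, e2] with ω a1 a2
          simp only [Gfun]
          rw [a1, a2]
        exact (hDtil k.castSucc).congr (hGmem k _ hX'mem) (hGmem k X hX) hGcong
      have hX'zero : ∀ k : Fin n, j ≤ k.castSucc →
          Dtil k.castSucc (Gfun μ t F k (μ[X|F (t j)])) =ᵐ[μ] 0 :=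
        fun k hk => hTzero k _ hX'mem j hk (μ[X|F (t j)])
          stronglyMeasurable_condExp.measurable EventuallyEq.rfl
      have hsplit' : Sfun μ t F Dtil i (μ[X|F (t j)]) =ᵐ[μ]
          fun ω => ∑ k ∈ Af.filter
            (fun k : Fin n => ¬ j ≤ k.castSucc), Dtil k.castSucc (Gfun μ t F k X) ω := by
        have hsp : Sfun μ t F Dtil i (μ[X|F (t j)]) = (fun ω => ∑ k ∈ Af.filter
              (fun k : Fin n => ¬ j ≤ k.castSucc),
                Dtil k.castSucc (Gfun μ t F k (μ[X|F (t j)])) ω)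
            + (fun ω => ∑ k ∈ Af.filter
              (fun k : Fin n => j ≤ k.castSucc),
                Dtil k.castSucc (Gfun μ t F k (μ[X|F (t j)])) ω) := by
          funext ω
          simp only [Sfun, Pi.add_apply]
          exact ((Finset.sum_filter_add_sum_filter_not Af
            (fun k : Fin n => j ≤ k.castSucc) _).symm.trans (add_comm _ _))
        rw [hsp]
        have p1 : (fun ω => ∑ k ∈ Af.filter (fun k : Fin n => ¬ j ≤ k.castSucc),
              Dtil k.castSucc (Gfun μ t F k (μ[X|F (t j)])) ω) =ᵐ[μ]
            fun ω => ∑ k ∈ Af.filter (fun k : Fin n => ¬ j ≤ k.castSucc),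
              Dtil k.castSucc (Gfun μ t F k X) ω :=
          ae_sum_congr _ (fun k hk => hX'cond k (Finset.mem_filter.mp hk).2)
        have p2 : (fun ω => ∑ k ∈ Af.filter (fun k : Fin n => j ≤ k.castSucc),
              Dtil k.castSucc (Gfun μ t F k (μ[X|F (t j)])) ω) =ᵐ[μ]
            fun ω => ∑ k ∈ Af.filter (fun k : Fin n => j ≤ k.castSucc), (0:ℝ) := by
          have := ae_sum_congr (μ := μ) (Af.filter (fun k : Fin n => j ≤ k.castSucc))
            (f := fun k : Fin n => Dtil k.castSucc (Gfun μ t F k (μ[X|F (t j)])))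
            (h := fun _ => (0 : Ω → ℝ))
            (fun k hk => hX'zero k (Finset.mem_filter.mp hk).2)
          exact this
        filter_upwards [p1, p2] with ω b1 b2
        simp only [Pi.add_apply]
        rw [b1, b2]
        simp
      exact hsplit'
    refine c1.trans ?_
    exact c3.add c2
end

section
/- Discrete-time decomposition of dynamic deviation measures (necessity direction of Proposition 1): let I = {t_0 < t_1 < ... < t_n} ⊆ [0,T] with t_n = T, and let (D_t)_{t∈I} be a family of F_t-conditional convex deviation measures indexed by I satisfying the recursive property (D5): D_t(X) = D_t(E[X|F_s]) + E[D_s(X)|F_t] a.s. for all t, s ∈ I with t ≤ s. Then for every t ∈ I and X ∈ L²(F_T): D_t(X) = E[ Σ_{i : t_i ≥ t, i < n} D_{t_i}( E[X|F_{t_{i+1}}] − E[X|F_{t_i}] ) | F_t ] almost surely. -/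
open MeasureTheory

section Aux

set_option maxHeartbeats 1000000

variable {Ω : Type*} {m m0 : MeasurableSpace Ω} {μ : Measure Ω} [IsProbabilityMeasure μ]


lemma memℒp_condexp_two (hm : m ≤ m0) {f : Ω → ℝ} (hf : MemLp f 2 μ) :
    MemLp (μ[f|m]) 2 μ := by
  have hae : (condExpL2 ℝ ℝ hm (hf.toLp f) : Ω →₂[μ] ℝ) =ᵐ[μ] μ[f|m] := by
    refine ae_eq_condExp_of_forall_setIntegral_eq hm (hf.integrable one_le_two)
      (fun s _ _ => ((Lp.memLp _).integrable one_le_two).integrableOn)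
      (fun s hs hμs => ?_) (aestronglyMeasurable_condExpL2 hm _)
    rw [integral_condExpL2_eq hm (hf.toLp f) hs hμs.ne]
    exact setIntegral_congr_ae (hm s hs) ((MemLp.coeFn_toLp hf).mono fun x hx _ => hx)
  exact (Lp.memLp _).ae_eq hae

lemma IsCondDeviation.locality {D : (Ω → ℝ) → Ω → ℝ}
    (hD : IsCondDeviation μ m D) {X Z : Ω → ℝ} (hX : MemLp X 2 μ) (hZ : MemLp Z 2 μ)
    {A : Set Ω} (hA : MeasurableSet[m] A) (hXZ : ∀ ω ∈ A, X ω = Z ω) :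
    ∀ᵐ ω ∂μ, ω ∈ A → D X ω = D Z ω := by
  obtain ⟨-, -, -, -, hconv⟩ := hD
  set lam : Ω → ℝ := A.indicator (fun _ => 1) with hlam
  have hlamm : Measurable[m] lam := measurable_const.indicator hA
  have h0 : ∀ ω, 0 ≤ lam ω := fun ω => Set.indicator_nonneg (fun _ _ => zero_le_one) ω
  have h1 : ∀ ω, lam ω ≤ 1 := by
    intro ω; by_cases h : ω ∈ A <;> simp [hlam, h]
  have key1 := hconv X Z hX hZ lam hlamm h0 h1
  have key2 := hconv Z X hZ hX lam hlamm h0 h1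
  have e1 : (fun ω => lam ω * X ω + (1 - lam ω) * Z ω) = Z := by
    funext ω; by_cases h : ω ∈ A
    · simp [hlam, h, hXZ ω h]
    · simp [hlam, h]
  have e2 : (fun ω => lam ω * Z ω + (1 - lam ω) * X ω) = X := by
    funext ω; by_cases h : ω ∈ A
    · simp [hlam, h, hXZ ω h]
    · simp [hlam, h]
  rw [e1] at key1
  rw [e2] at key2
  filter_upwards [key1, key2] with ω hk1 hk2 hωA
  have hl : lam ω = 1 := by simp [hlam, hωA]
  rw [hl] at hk1 hk2
  simp only [sub_self, one_mul, zero_mul, add_zero] at hk1 hk2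
  linarith

lemma IsCondDeviation.translation (hm : m ≤ m0) {D : (Ω → ℝ) → Ω → ℝ}
    (hD : IsCondDeviation μ m D) {Y c : Ω → ℝ} (hY : MemLp Y 2 μ) (hc : MemLp c 2 μ)
    (hcm : Measurable[m] c) :
    D (fun ω => Y ω - c ω) =ᵐ[μ] D Y := by
  have hYc : MemLp (fun ω => Y ω - c ω) 2 μ := hY.sub hc
  have habs : Measurable[m] (fun ω => |c ω|) := measurable_abs.comp hcm
  have hkey : ∀ k : ℕ, ∀ᵐ ω ∂μ, |c ω| ≤ (k : ℝ) → D (fun ω' => Y ω' - c ω') ω = D Y ω := by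
    intro k
    set ck : Ω → ℝ := fun ω => if |c ω| ≤ (k : ℝ) then c ω else 0 with hckdef
    have hA : MeasurableSet[m] {ω | |c ω| ≤ (k : ℝ)} := measurableSet_le habs measurable_const
    have hckm : Measurable[m] ck := Measurable.ite hA hcm measurable_const
    have hckb : ∀ ω, |ck ω| ≤ (k : ℝ) := by
      intro ω; by_cases h : |c ω| ≤ (k : ℝ)
      · simpa [hckdef, h] using h
      · simp [hckdef, h]
    have hckL : MemLp ck 2 μ := by
      refine MemLp.of_bound ((hckm.mono hm le_rfl).aestronglyMeasurable) (k : ℝ)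
        (Filter.Eventually.of_forall fun ω => ?_)
      simpa [Real.norm_eq_abs] using hckb ω
    have hYck : MemLp (fun ω => Y ω - ck ω) 2 μ := hY.sub hckL
    have htr := hD.2.2.1 (fun ω => Y ω - ck ω) hYck ck hckm ⟨(k : ℝ), hckb⟩
    have hfun : (fun ω => Y ω - ck ω) + ck = Y := by
      funext ω; simp
    rw [hfun] at htr
    have hloc := IsCondDeviation.locality hD hYc hYck hA
      (fun ω hω => by
        have hω' : |c ω| ≤ (k : ℝ) := hω
        simp only [hckdef]; rw [if_pos hω'])
    filter_upwards [hloc, htr] with ω h1 h2 hmem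
    rw [h1 hmem, ← h2]
  filter_upwards [ae_all_iff.2 hkey] with ω h
  obtain ⟨k, hk⟩ := exists_nat_ge |c ω|
  exact h k hk


end Aux

/-- **Discrete-time decomposition of dynamic deviation measures (necessity direction of
Proposition 1).**  Let `I = {t_0 < … < t_n} ⊆ [0,T]` with `t_n = T`, `F_T` the ambient
σ-algebra, and let `(D_{t_i})` be `F_{t_i}`-conditional convex deviation measures satisfying
the recursive property (D5).  Then
`D_{t_i}(X) = E[ Σ_{j ≥ i} D_{t_j}(E[X|F_{t_{j+1}}] − E[X|F_{t_j}]) | F_{t_i} ]` a.s. -/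
theorem discrete_decomposition_dynamicDeviation {Ω : Type*} {m0 : MeasurableSpace Ω}
    (μ : Measure Ω) [IsProbabilityMeasure μ] (T : ℝ) (n : ℕ)
    (t : Fin (n + 1) → ℝ) (htmono : StrictMono t) (ht0 : 0 ≤ t 0) (htn : t (Fin.last n) = T)
    (F : ℝ → MeasurableSpace Ω) (hFmono : Monotone F) (hFle : ∀ s, F s ≤ m0)
    (hFT : F T = m0)
    (D : Fin (n + 1) → (Ω → ℝ) → Ω → ℝ)
    (hD : ∀ i, IsCondDeviation μ (F (t i)) (D i))
    -- (D5) recursive property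
    (hrec : ∀ i j : Fin (n + 1), i ≤ j → ∀ X : Ω → ℝ, MemLp X 2 μ →
      D i X =ᵐ[μ] D i (μ[X|F (t j)]) + μ[D j X|F (t i)]) :
    ∀ i (X : Ω → ℝ), MemLp X 2 μ →
      D i X =ᵐ[μ]
        μ[fun ω => ∑ j ∈ Finset.univ.filter (fun j : Fin n => i ≤ j.castSucc),
            D j.castSucc
              (fun ω' => (μ[X|F (t j.succ)]) ω' - (μ[X|F (t j.castSucc)]) ω') ω
          | F (t i)] := by
  intro i X hX
  -- MemLp of each increment
  have hΔmem : ∀ j : Fin n,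
      MemLp (fun ω' => (μ[X|F (t j.succ)]) ω' - (μ[X|F (t j.castSucc)]) ω') 2 μ :=
    fun j => (memℒp_condexp_two (hFle _) hX).sub (memℒp_condexp_two (hFle _) hX)
  induction i using Fin.reverseInduction with
  | last =>
    have hempty : (Finset.univ.filter (fun j : Fin n => Fin.last n ≤ j.castSucc)) = ∅ :=
      Finset.filter_false_of_mem (fun j _ => not_le.2 (Fin.castSucc_lt_last j))
    rw [hempty]
    simp only [Finset.sum_empty]
    have hz : μ[(fun _ : Ω => (0 : ℝ))|F (t (Fin.last n))] = 0 := condExp_zero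
    rw [hz]
    -- D last X = 0 a.e. via D2
    have hiff := ((hD (Fin.last n)).2.2.2.1 X hX).2
    refine hiff.2 ?_
    obtain ⟨Y, hYsm, hXY⟩ := hX.aestronglyMeasurable
    refine ⟨Y, ?_, hXY⟩
    rw [htn, hFT]
    exact hYsm.measurable
  | cast i ih =>
    have hm : F (t i.castSucc) ≤ m0 := hFle _
    have hle : F (t i.castSucc) ≤ F (t i.succ) :=
      hFmono (htmono.monotone (Fin.castSucc_lt_succ (i := i)).le)
    have hΔmemi := hΔmem i
    have hDi := (hD i.castSucc).1 _ hΔmemi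
    have hDiInt : Integrable
        (D i.castSucc (fun ω' => (μ[X|F (t i.succ)]) ω' - (μ[X|F (t i.castSucc)]) ω')) μ :=
      hDi.2.integrable one_le_two
    have hS'int : Integrable (fun ω => ∑ j ∈ Finset.univ.filter
        (fun j : Fin n => i.succ ≤ j.castSucc),
        D j.castSucc (fun ω' => (μ[X|F (t j.succ)]) ω' - (μ[X|F (t j.castSucc)]) ω') ω) μ := by
      apply integrable_finset_sum
      intro j _
      exact ((hD j.castSucc).1 _ (hΔmem j)).2.integrable one_le_two
    have hsplit : (fun ω => ∑ j ∈ Finset.univ.filter (fun j : Fin n => i.castSucc ≤ j.castSucc),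
          D j.castSucc (fun ω' => (μ[X|F (t j.succ)]) ω' - (μ[X|F (t j.castSucc)]) ω') ω)
        = fun ω => D i.castSucc (fun ω' => (μ[X|F (t i.succ)]) ω' - (μ[X|F (t i.castSucc)]) ω') ω
            + ∑ j ∈ Finset.univ.filter (fun j : Fin n => i.succ ≤ j.castSucc),
              D j.castSucc (fun ω' => (μ[X|F (t j.succ)]) ω' - (μ[X|F (t j.castSucc)]) ω') ω := by
      have hfil : Finset.univ.filter (fun j : Fin n => i.castSucc ≤ j.castSucc)
          = insert i (Finset.univ.filter (fun j : Fin n => i.succ ≤ j.castSucc)) := by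
        ext j
        simp only [Finset.mem_filter, Finset.mem_insert, Finset.mem_univ, true_and,
          Fin.le_def, Fin.coe_castSucc, Fin.val_succ, Fin.ext_iff]
        omega
      have hnotmem : i ∉ Finset.univ.filter (fun j : Fin n => i.succ ≤ j.castSucc) := by
        simp [Fin.le_def]
      funext ω
      rw [hfil, Finset.sum_insert hnotmem]
    have h1 := hrec i.castSucc i.succ (Fin.castSucc_lt_succ (i := i)).le X hX
    have h2 : D i.castSucc (μ[X|F (t i.succ)]) =ᵐ[μ]
        D i.castSucc (fun ω' => (μ[X|F (t i.succ)]) ω' - (μ[X|F (t i.castSucc)]) ω') :=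
      (IsCondDeviation.translation (hFle _) (hD i.castSucc)
        (memℒp_condexp_two (hFle _) hX) (memℒp_condexp_two (hFle _) hX)
        stronglyMeasurable_condExp.measurable).symm
    have h3 : μ[D i.succ X|F (t i.castSucc)] =ᵐ[μ]
        μ[fun ω => ∑ j ∈ Finset.univ.filter (fun j : Fin n => i.succ ≤ j.castSucc),
          D j.castSucc (fun ω' => (μ[X|F (t j.succ)]) ω' - (μ[X|F (t j.castSucc)]) ω') ω
          | F (t i.castSucc)] :=
      (condExp_congr_ae ih).trans (condExp_condExp_of_le hle (hFle _))
    have h4 : μ[D i.castSucc (fun ω' => (μ[X|F (t i.succ)]) ω' - (μ[X|F (t i.castSucc)]) ω')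
        | F (t i.castSucc)]
        = D i.castSucc (fun ω' => (μ[X|F (t i.succ)]) ω' - (μ[X|F (t i.castSucc)]) ω') :=
      condExp_of_stronglyMeasurable hm hDi.1 hDiInt
    have h5 := condExp_add (μ := μ) (m := F (t i.castSucc)) hDiInt hS'int
    rw [h4] at h5
    refine (h1.trans (h2.add h3)).trans ?_
    rw [hsplit]
    exact h5.symm
end

section
/- Lemma (independence implies constancy): let (D_t)_{t∈[0,T]} be a distribution invariant dynamic deviation measure, let t ∈ [0,T], and suppose some F_t-measurable random variable is uniformly distributed on [0,1] (or t = 0 with F_0 trivial). If Y ∈ L²(F_T) is independent of F_t, then D_t(Y) is almost surely constant and equal to D_0(Y). -/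
open MeasureTheory

/-- A dynamic deviation measure on `[0,T]`: a family of conditional convex deviation measures
satisfying (D4) `L²`-continuity and (D5) recursiveness. -/
structure IsDynamicDeviation {Ω : Type*} {m0 : MeasurableSpace Ω} (μ : Measure Ω)
    (F : ℝ → MeasurableSpace Ω) (T : ℝ) (D : ℝ → (Ω → ℝ) → Ω → ℝ) : Prop where
  cond : ∀ t ∈ Set.Icc (0 : ℝ) T, IsCondDeviation μ (F t) (D t)
  -- (D4) continuity: if `Xₙ → X` in `L²` then `D_t(Xₙ) → D_t(X)` in `L²`
  cont : ∀ t ∈ Set.Icc (0 : ℝ) T, ∀ (X : ℕ → Ω → ℝ) (X₀ : Ω → ℝ),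
    (∀ k, MemLp (X k) 2 μ) → MemLp X₀ 2 μ →
    Filter.Tendsto (fun k => eLpNorm (X k - X₀) 2 μ) Filter.atTop (nhds 0) →
    Filter.Tendsto (fun k => eLpNorm (D t (X k) - D t X₀) 2 μ) Filter.atTop (nhds 0)
  -- (D5) recursiveness
  recur : ∀ t s : ℝ, 0 ≤ t → t ≤ s → s ≤ T → ∀ X : Ω → ℝ, MemLp X 2 μ →
    D t X =ᵐ[μ] D t (μ[X|F s]) + μ[D s X|F t]

/-- Distribution invariance of a dynamic deviation measure: `D_0(X₁) = D_0(X₂)` whenever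
`X₁, X₂ ∈ L²` have the same law. -/
def DistInvariant {Ω : Type*} {m0 : MeasurableSpace Ω} (μ : Measure Ω)
    (D : ℝ → (Ω → ℝ) → Ω → ℝ) : Prop :=
  ∀ X₁ X₂ : Ω → ℝ, MemLp X₁ 2 μ → MemLp X₂ 2 μ →
    μ.map X₁ = μ.map X₂ → D 0 X₁ =ᵐ[μ] D 0 X₂

section AuxLemmas

variable {Ω : Type*} {m0 : MeasurableSpace Ω} {μ : Measure Ω}
  {F : ℝ → MeasurableSpace Ω} {T : ℝ} {D : ℝ → (Ω → ℝ) → Ω → ℝ}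

/-- `D s` is invariant under a.e. modification, as a consequence of (D4). -/
private lemma Dae_aux (hD : IsDynamicDeviation μ F T D) {s : ℝ} (hs : s ∈ Set.Icc (0:ℝ) T)
    {X X' : Ω → ℝ} (hX : MemLp X 2 μ) (hX' : MemLp X' 2 μ) (h : X =ᵐ[μ] X') :
    D s X =ᵐ[μ] D s X' := by
  have hzero : eLpNorm (X - X') 2 μ = 0 := by
    rw [eLpNorm_eq_zero_iff (hX.1.sub hX'.1) (by norm_num)]
    filter_upwards [h] with ω hω
    simp [Pi.sub_apply, hω, sub_eq_zero]
  have hc := hD.cont s hs (fun _ => X) X' (fun _ => hX) hX'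
    (by simpa only [hzero] using (tendsto_const_nhds :
      Filter.Tendsto (fun _ : ℕ => (0:ENNReal)) Filter.atTop (nhds 0)))
  have h0 : eLpNorm (D s X - D s X') 2 μ = 0 := by simpa using hc
  have := (eLpNorm_eq_zero_iff
    ((((hD.cond s hs).1 X hX).2).1.sub (((hD.cond s hs).1 X' hX').2).1) (by norm_num)).1 h0
  filter_upwards [this] with ω hω
  simpa [Pi.sub_apply, sub_eq_zero] using hω

/-- `D s` vanishes on constants. -/
private lemma Dconst_aux (hD : IsDynamicDeviation μ F T D) {s : ℝ} (hs : s ∈ Set.Icc (0:ℝ) T)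
    (c : ℝ) : D s (fun _ => c) =ᵐ[μ] 0 := by
  have h := (hD.cond s hs).2.2.1 0 MemLp.zero (fun _ => c) measurable_const
    ⟨|c|, fun _ => le_refl _⟩
  have heq : ((0 : Ω → ℝ) + fun _ => c) = fun _ : Ω => c := by funext ω; simp
  rw [heq] at h
  exact h.trans (hD.cond s hs).2.1

end AuxLemmas
/-- **Independence implies constancy (Lemma 1).**  Let `(D_t)` be a distribution invariant
dynamic deviation measure, `t ∈ [0,T]`, and suppose some `F_t`-measurable random variable is
uniformly distributed on `[0,1]` (or `t = 0` with `F_0` trivial).  If `Y ∈ L²` is independent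
of `F_t`, then `D_t(Y)` is a.s. constant and equal to `D_0(Y)`. -/
theorem distInvariant_indep_const {Ω : Type*} {m0 : MeasurableSpace Ω}
    (μ : Measure Ω) [IsProbabilityMeasure μ] (T : ℝ) (hT : 0 < T)
    (F : ℝ → MeasurableSpace Ω) (hFmono : Monotone F) (hFle : ∀ s, F s ≤ m0)
    (hFT : F T = m0)
    (D : ℝ → (Ω → ℝ) → Ω → ℝ)
    (hD : IsDynamicDeviation μ F T D) (hinv : DistInvariant μ D)
    (t : ℝ) (ht : t ∈ Set.Icc (0 : ℝ) T)
    (hrich : (∃ U : Ω → ℝ, Measurable[F t] U ∧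
        ∀ r ∈ Set.Icc (0 : ℝ) 1, μ {ω | U ω ≤ r} = ENNReal.ofReal r) ∨
      (t = 0 ∧ F 0 = ⊥))
    (Y : Ω → ℝ) (hY : MemLp Y 2 μ)
    (hindep : ProbabilityTheory.Indep
      (MeasurableSpace.comap Y inferInstance) (F t) μ) :
    ∃ c : ℝ, D t Y =ᵐ[μ] (fun _ => c) ∧ D 0 Y =ᵐ[μ] (fun _ => c) := by
  classical
  have h0T : (0:ℝ) ∈ Set.Icc (0:ℝ) T := ⟨le_refl _, hT.le⟩
  have hcondt := hD.cond t ht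
  -- a strongly measurable representative of `Y`
  obtain ⟨Y', hY'sm, hYY'⟩ : ∃ Y' : Ω → ℝ, StronglyMeasurable Y' ∧ Y =ᵐ[μ] Y' :=
    ⟨hY.1.mk Y, hY.1.stronglyMeasurable_mk, hY.1.ae_eq_mk⟩
  have hY' : MemLp Y' 2 μ := hY.ae_eq hYY'
  have hY'm : Measurable Y' := hY'sm.measurable
  -- independence transfers to `Y'`
  have hind' : ∀ s : Set ℝ, MeasurableSet s → ∀ B : Set Ω, MeasurableSet[F t] B →
      μ (Y' ⁻¹' s ∩ B) = μ (Y' ⁻¹' s) * μ B := by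
    intro s hs B hB
    have h1 : μ (Y ⁻¹' s ∩ B) = μ (Y ⁻¹' s) * μ B :=
      (ProbabilityTheory.Indep_iff _ _ μ).1 hindep _ _ ⟨s, hs, rfl⟩ hB
    have he : (Y' ⁻¹' s : Set Ω) =ᵐ[μ] (Y ⁻¹' s : Set Ω) := by
      rw [Filter.eventuallyEq_set]
      filter_upwards [hYY'] with ω hω
      simp [Set.mem_preimage, hω]
    have he2 : (Y' ⁻¹' s ∩ B : Set Ω) =ᵐ[μ] (Y ⁻¹' s ∩ B : Set Ω) := by
      rw [Filter.eventuallyEq_set] at he ⊢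
      filter_upwards [he] with ω hω
      simp [Set.mem_inter_iff, hω]
    rw [measure_congr he2, measure_congr he, h1]
  -- basic facts about `Z := D t Y'`
  have hZsm : StronglyMeasurable[F t] (D t Y') := (hcondt.1 Y' hY').1
  have hZ2 : MemLp (D t Y') 2 μ := (hcondt.1 Y' hY').2
  have hZpos : (0:Ω → ℝ) ≤ᵐ[μ] D t Y' := (hcondt.2.2.2.1 Y' hY').1
  have hZm0 : Measurable (D t Y') := hZsm.measurable.mono (hFle t) le_rfl
  -- conditional expectation of `Y'` given `F t` is constant
  have hY'comap : Measurable[MeasurableSpace.comap Y' inferInstance] Y' :=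
    fun s hs => ⟨s, hs, rfl⟩
  have hle₁ : MeasurableSpace.comap Y' inferInstance ≤ m0 := by
    rintro s ⟨s', hs', rfl⟩; exact hY'm hs'
  have hindY' : ProbabilityTheory.Indep (MeasurableSpace.comap Y' inferInstance) (F t) μ := by
    rw [ProbabilityTheory.Indep_iff]
    rintro t1 t2 ⟨s, hs, rfl⟩ ht2
    exact hind' s hs t2 ht2
  have hce : μ[Y'|F t] =ᵐ[μ] fun _ => ∫ x, Y' x ∂μ :=
    condExp_indep_eq hle₁ (hFle t) hY'comap.stronglyMeasurable hindY'
  -- membership lemmas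
  have hlam01 : ∀ (A : Set Ω) (ω : Ω),
      Set.indicator A (fun _ => (1:ℝ)) ω = 0 ∨ Set.indicator A (fun _ => (1:ℝ)) ω = 1 := by
    intro A ω; by_cases hω : ω ∈ A
    · exact Or.inr (Set.indicator_of_mem hω _)
    · exact Or.inl (Set.indicator_of_notMem hω _)
  have hXmem : ∀ A : Set Ω, MeasurableSet[F t] A →
      MemLp (fun ω => Set.indicator A (fun _ => (1:ℝ)) ω * Y' ω) 2 μ := by
    intro A hA
    refine MemLp.of_le hY'
      (((measurable_const.indicator (hFle t _ hA)).aestronglyMeasurable).mul hY'.1)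
      (Filter.Eventually.of_forall fun ω => ?_)
    rcases hlam01 A ω with h | h <;> simp [h, norm_nonneg]
  have hCmem : ∀ (A : Set Ω) (c : ℝ), MeasurableSet[F t] A →
      MemLp (fun ω => Set.indicator A (fun _ => (1:ℝ)) ω * c) 2 μ := by
    intro A c hA
    refine MemLp.of_le (memLp_const c)
      (((measurable_const.indicator (hFle t _ hA)).aestronglyMeasurable).mul
        aestronglyMeasurable_const)
      (Filter.Eventually.of_forall fun ω => ?_)
    rcases hlam01 A ω with h | h <;> simp [h, norm_nonneg]
  -- locality of `D t`
  have hloc : ∀ A : Set Ω, MeasurableSet[F t] A →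
      D t (fun ω => Set.indicator A (fun _ => (1:ℝ)) ω * Y' ω)
        =ᵐ[μ] fun ω => Set.indicator A (fun _ => (1:ℝ)) ω * D t Y' ω := by
    intro A hA
    have hlamFt : Measurable[F t] (Set.indicator A (fun _ => (1:ℝ))) :=
      measurable_const.indicator hA
    have hl0 : ∀ ω, 0 ≤ Set.indicator A (fun _ => (1:ℝ)) ω := by
      intro ω; rcases hlam01 A ω with h | h <;> simp [h]
    have hl1 : ∀ ω, Set.indicator A (fun _ => (1:ℝ)) ω ≤ 1 := by
      intro ω; rcases hlam01 A ω with h | h <;> simp [h]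
    have hXA := hXmem A hA
    have h1 := hcondt.2.2.2.2 Y' 0 hY' MemLp.zero _ hlamFt hl0 hl1
    have harg1 : (fun ω => Set.indicator A (fun _ => (1:ℝ)) ω * Y' ω
        + (1 - Set.indicator A (fun _ => (1:ℝ)) ω) * (0:Ω → ℝ) ω)
        = fun ω => Set.indicator A (fun _ => (1:ℝ)) ω * Y' ω := by
      funext ω; simp
    rw [harg1] at h1
    have h2 := hcondt.2.2.2.2 _ Y' hXA hY' _ hlamFt hl0 hl1
    have harg2 : (fun ω => Set.indicator A (fun _ => (1:ℝ)) ω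
        * (Set.indicator A (fun _ => (1:ℝ)) ω * Y' ω)
        + (1 - Set.indicator A (fun _ => (1:ℝ)) ω) * Y' ω) = Y' := by
      funext ω; rcases hlam01 A ω with h | h <;> rw [h] <;> ring
    rw [harg2] at h2
    have hpos := (hcondt.2.2.2.1 _ hXA).1
    have hD0t : D t (0:Ω → ℝ) =ᵐ[μ] 0 := hcondt.2.1
    filter_upwards [h1, h2, hpos, hD0t] with ω hω1 hω2 hω0 hωz
    simp only [Pi.zero_apply] at hωz hω0
    rcases hlam01 A ω with h | h
    · rw [h] at hω1 ⊢
      rw [hωz] at hω1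
      simp only [zero_mul, one_mul, sub_zero, mul_zero, mul_one] at hω1 ⊢
      linarith
    · rw [h] at hω1 hω2 ⊢
      simp only [zero_mul, one_mul, sub_self, mul_zero, mul_one, add_zero, zero_add] at hω1 hω2 ⊢
      linarith
  -- the master identity: for A in F_t,  ∫_A D t Y' = ∫ D 0 (1_A Y') - ∫ D 0 (1_A m)
  have main : ∀ A : Set Ω, MeasurableSet[F t] A →
      (∫ ω, Set.indicator A (fun _ => (1:ℝ)) ω * D t Y' ω ∂μ)
        = (∫ ω, D 0 (fun ω' => Set.indicator A (fun _ => (1:ℝ)) ω' * Y' ω') ω ∂μ)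
          - ∫ ω, D 0 (fun ω' => Set.indicator A (fun _ => (1:ℝ)) ω' * (∫ x, Y' x ∂μ)) ω ∂μ := by
    intro A hA
    have hlamFt : Measurable[F t] (Set.indicator A (fun _ => (1:ℝ))) :=
      measurable_const.indicator hA
    have hXA := hXmem A hA
    have hCA := hCmem A (∫ x, Y' x ∂μ) hA
    have hXAint : Integrable (fun ω => Set.indicator A (fun _ => (1:ℝ)) ω * Y' ω) μ :=
      hXA.integrable one_le_two
    have hpull : μ[fun ω => Set.indicator A (fun _ => (1:ℝ)) ω * Y' ω|F t]
        =ᵐ[μ] Set.indicator A (fun _ => (1:ℝ)) * μ[Y'|F t] :=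
      condExp_mul_of_stronglyMeasurable_left hlamFt.stronglyMeasurable hXAint
        (hY'.integrable one_le_two)
    have hcXA : μ[fun ω => Set.indicator A (fun _ => (1:ℝ)) ω * Y' ω|F t]
        =ᵐ[μ] fun ω => Set.indicator A (fun _ => (1:ℝ)) ω * (∫ x, Y' x ∂μ) := by
      refine hpull.trans ?_
      filter_upwards [hce] with ω hω
      simp only [Pi.mul_apply, hω]
    have hml : MemLp (μ[fun ω => Set.indicator A (fun _ => (1:ℝ)) ω * Y' ω|F t]) 2 μ :=
      hCA.ae_eq hcXA.symm
    have hrec := hD.recur 0 t le_rfl ht.1 ht.2 _ hXA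
    have e1 : D 0 (μ[fun ω => Set.indicator A (fun _ => (1:ℝ)) ω * Y' ω|F t])
        =ᵐ[μ] D 0 (fun ω => Set.indicator A (fun _ => (1:ℝ)) ω * (∫ x, Y' x ∂μ)) :=
      Dae_aux hD h0T hml hCA hcXA
    have hint1 : Integrable
        (D 0 (μ[fun ω => Set.indicator A (fun _ => (1:ℝ)) ω * Y' ω|F t])) μ :=
      (((hD.cond 0 h0T).1 _ hml).2).integrable one_le_two
    have hint2 : Integrable
        (μ[D t (fun ω => Set.indicator A (fun _ => (1:ℝ)) ω * Y' ω)|F 0]) μ :=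
      integrable_condExp
    have eqint : ∫ ω, D 0 (fun ω' => Set.indicator A (fun _ => (1:ℝ)) ω' * Y' ω') ω ∂μ
        = (∫ ω, D 0 (μ[fun ω' => Set.indicator A (fun _ => (1:ℝ)) ω' * Y' ω'|F t]) ω ∂μ)
          + ∫ ω, (μ[D t (fun ω' => Set.indicator A (fun _ => (1:ℝ)) ω' * Y' ω')|F 0]) ω ∂μ := by
      rw [← integral_add hint1 hint2]
      exact integral_congr_ae hrec
    have eqcond : ∫ ω, (μ[D t (fun ω' => Set.indicator A (fun _ => (1:ℝ)) ω' * Y' ω')|F 0]) ω ∂μ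
        = ∫ ω, Set.indicator A (fun _ => (1:ℝ)) ω * D t Y' ω ∂μ := by
      rw [integral_condExp (hFle 0)]
      exact integral_congr_ae (hloc A hA)
    have eq1 : ∫ ω, D 0 (μ[fun ω' => Set.indicator A (fun _ => (1:ℝ)) ω' * Y' ω'|F t]) ω ∂μ
        = ∫ ω, D 0 (fun ω' => Set.indicator A (fun _ => (1:ℝ)) ω' * (∫ x, Y' x ∂μ)) ω ∂μ :=
      integral_congr_ae e1
    rw [eqcond, eq1] at eqint
    linarith
  -- pushforward computations
  have hmapind : ∀ s : Set ℝ, MeasurableSet s → ∀ A : Set Ω, MeasurableSet[F t] A →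
      μ ((fun ω => Set.indicator A (fun _ => (1:ℝ)) ω * Y' ω) ⁻¹' s)
        = μ (Y' ⁻¹' s) * μ A + (if (0:ℝ) ∈ s then μ Aᶜ else 0) := by
    intro s hs A hA
    have hpre : (fun ω => Set.indicator A (fun _ => (1:ℝ)) ω * Y' ω) ⁻¹' s
        = (A ∩ Y' ⁻¹' s) ∪ (Aᶜ ∩ {_ω : Ω | (0:ℝ) ∈ s}) := by
      ext ω
      by_cases hω : ω ∈ A <;>
        simp [Set.indicator_of_mem, Set.indicator_of_notMem, hω, Set.mem_preimage,
          Set.mem_setOf_eq]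
    rw [hpre, measure_union
      (disjoint_compl_right.mono Set.inter_subset_left Set.inter_subset_left)
      (((hFle t _ hA).compl).inter (MeasurableSet.const _))]
    congr 1
    · rw [Set.inter_comm]; exact hind' s hs A hA
    · by_cases h0 : (0:ℝ) ∈ s <;> simp [h0]
  have hmapc : ∀ (c : ℝ) (s : Set ℝ), MeasurableSet s → ∀ A : Set Ω, MeasurableSet[F t] A →
      μ ((fun ω => Set.indicator A (fun _ => (1:ℝ)) ω * c) ⁻¹' s)
        = (if c ∈ s then μ A else 0) + (if (0:ℝ) ∈ s then μ Aᶜ else 0) := by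
    intro c s hs A hA
    have hpre : (fun ω => Set.indicator A (fun _ => (1:ℝ)) ω * c) ⁻¹' s
        = (A ∩ {_ω : Ω | c ∈ s}) ∪ (Aᶜ ∩ {_ω : Ω | (0:ℝ) ∈ s}) := by
      ext ω
      by_cases hω : ω ∈ A <;>
        simp [Set.indicator_of_mem, Set.indicator_of_notMem, hω, Set.mem_preimage,
          Set.mem_setOf_eq]
    rw [hpre, measure_union
      (disjoint_compl_right.mono Set.inter_subset_left Set.inter_subset_left)
      (((hFle t _ hA).compl).inter (MeasurableSet.const _))]
    congr 1
    · by_cases h0 : c ∈ s <;> simp [h0]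
    · by_cases h0 : (0:ℝ) ∈ s <;> simp [h0]
  -- the key comparison
  have key : ∀ A B : Set Ω, MeasurableSet[F t] A → MeasurableSet[F t] B → μ A = μ B →
      (∫ ω, Set.indicator A (fun _ => (1:ℝ)) ω * D t Y' ω ∂μ)
        = ∫ ω, Set.indicator B (fun _ => (1:ℝ)) ω * D t Y' ω ∂μ := by
    intro A B hA hB hAB
    have hcompl : μ Aᶜ = μ Bᶜ := by
      rw [prob_compl_eq_one_sub (hFle t _ hA), prob_compl_eq_one_sub (hFle t _ hB), hAB]
    have hXlaw : μ.map (fun ω => Set.indicator A (fun _ => (1:ℝ)) ω * Y' ω)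
        = μ.map (fun ω => Set.indicator B (fun _ => (1:ℝ)) ω * Y' ω) := by
      refine Measure.ext fun s hs => ?_
      rw [Measure.map_apply (f := fun ω => Set.indicator A (fun _ => (1:ℝ)) ω * Y' ω) ((measurable_const.indicator (hFle t _ hA)).mul hY'm) hs,
        Measure.map_apply (f := fun ω => Set.indicator B (fun _ => (1:ℝ)) ω * Y' ω) ((measurable_const.indicator (hFle t _ hB)).mul hY'm) hs,
        hmapind s hs A hA, hmapind s hs B hB, hAB, hcompl]
    have hClaw : μ.map (fun ω => Set.indicator A (fun _ => (1:ℝ)) ω * (∫ x, Y' x ∂μ))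
        = μ.map (fun ω => Set.indicator B (fun _ => (1:ℝ)) ω * (∫ x, Y' x ∂μ)) := by
      refine Measure.ext fun s hs => ?_
      rw [Measure.map_apply (f := fun ω => Set.indicator A (fun _ => (1:ℝ)) ω * (∫ x, Y' x ∂μ)) ((measurable_const.indicator (hFle t _ hA)).mul measurable_const) hs,
        Measure.map_apply (f := fun ω => Set.indicator B (fun _ => (1:ℝ)) ω * (∫ x, Y' x ∂μ)) ((measurable_const.indicator (hFle t _ hB)).mul measurable_const) hs,
        hmapc _ s hs A hA, hmapc _ s hs B hB, hAB, hcompl]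
    rw [main A hA, main B hB,
      integral_congr_ae (hinv _ _ (hXmem A hA) (hXmem B hB) hXlaw),
      integral_congr_ae (hinv _ _ (hCmem A _ hA) (hCmem B _ hB) hClaw)]
  -- integrability of truncated Z
  have hintS : ∀ S : Set Ω, MeasurableSet S →
      Integrable (fun ω => Set.indicator S (fun _ => (1:ℝ)) ω * D t Y' ω) μ := by
    intro S hS
    refine (MemLp.of_le hZ2 ((measurable_const.indicator hS).aestronglyMeasurable.mul hZ2.1)
      (Filter.Eventually.of_forall fun ω => ?_)).integrable one_le_two
    rcases hlam01 S ω with h | h <;> simp [h, norm_nonneg]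
  -- every level set of Z has measure 0 or 1
  have hlevel : ∀ b : ℝ, μ {ω | b < D t Y' ω} = 0 ∨ μ {ω | b < D t Y' ω} = 1 := by
    intro b
    by_contra hcon
    push_neg at hcon
    obtain ⟨hne0, hne1⟩ := hcon
    set A := {ω | b < D t Y' ω} with hAdef
    have hA : MeasurableSet[F t] A := measurableSet_lt measurable_const hZsm.measurable
    have hApos : 0 < μ A := lt_of_le_of_ne zero_le (Ne.symm hne0)
    have hAlt : μ A < 1 := lt_of_le_of_ne prob_le_one hne1
    -- a set of the same measure and null symmetric difference forced by `key`
    have hdiff : ∀ Bs : Set Ω, MeasurableSet[F t] Bs → μ Bs = μ A →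
        μ (A \ Bs) = 0 ∧ μ (Bs \ A) = 0 := by
      intro Bs hBs hμBs
      have hint := key A Bs hA hBs hμBs.symm
      have hAm0 : MeasurableSet A := hFle t _ hA
      have hBm0 : MeasurableSet Bs := hFle t _ hBs
      have hABm : MeasurableSet (A ∩ Bs) := hAm0.inter hBm0
      have hADm : MeasurableSet (A \ Bs) := hAm0.diff hBm0
      have hBDm : MeasurableSet (Bs \ A) := hBm0.diff hAm0
      -- splitting the integrals
      have splitA : (∫ ω, Set.indicator A (fun _ => (1:ℝ)) ω * D t Y' ω ∂μ)
          = (∫ ω, Set.indicator (A ∩ Bs) (fun _ => (1:ℝ)) ω * D t Y' ω ∂μ)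
            + ∫ ω, Set.indicator (A \ Bs) (fun _ => (1:ℝ)) ω * D t Y' ω ∂μ := by
        rw [← integral_add (hintS _ hABm) (hintS _ hADm)]
        refine integral_congr_ae (Filter.Eventually.of_forall fun ω => ?_)
        by_cases h1 : ω ∈ A <;> by_cases h2 : ω ∈ Bs <;>
          simp [Set.indicator_apply, Set.mem_inter_iff, Set.mem_diff, h1, h2]
      have splitB : (∫ ω, Set.indicator Bs (fun _ => (1:ℝ)) ω * D t Y' ω ∂μ)
          = (∫ ω, Set.indicator (A ∩ Bs) (fun _ => (1:ℝ)) ω * D t Y' ω ∂μ)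
            + ∫ ω, Set.indicator (Bs \ A) (fun _ => (1:ℝ)) ω * D t Y' ω ∂μ := by
        rw [← integral_add (hintS _ hABm) (hintS _ hBDm)]
        refine integral_congr_ae (Filter.Eventually.of_forall fun ω => ?_)
        by_cases h1 : ω ∈ A <;> by_cases h2 : ω ∈ Bs <;>
          simp [Set.indicator_apply, Set.mem_inter_iff, Set.mem_diff, h1, h2]
      have hdd : μ (A \ Bs) = μ (Bs \ A) := by
        have h1 : μ (A ∩ Bs) + μ (A \ Bs) = μ A := measure_inter_add_diff A hBm0
        have h2 : μ (Bs ∩ A) + μ (Bs \ A) = μ Bs := measure_inter_add_diff Bs hAm0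
        rw [Set.inter_comm] at h2
        rw [hμBs] at h2
        have h3 : μ (A ∩ Bs) + μ (A \ Bs) = μ (A ∩ Bs) + μ (Bs \ A) := h1.trans h2.symm
        exact (ENNReal.add_right_inj (measure_ne_top μ _)).1 h3
      have hddr : (μ (A \ Bs)).toReal = (μ (Bs \ A)).toReal := by rw [hdd]
      -- equality of the difference integrals
      have hkey0 : (∫ ω, Set.indicator (A \ Bs) (fun _ => (1:ℝ)) ω * D t Y' ω ∂μ)
          = ∫ ω, Set.indicator (Bs \ A) (fun _ => (1:ℝ)) ω * D t Y' ω ∂μ := by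
        rw [splitA, splitB] at hint; linarith
      -- nonnegative auxiliary functions
      have hW1eq : (∫ ω, Set.indicator (A \ Bs) (fun ω' => D t Y' ω' - b) ω ∂μ)
          = (∫ ω, Set.indicator (A \ Bs) (fun _ => (1:ℝ)) ω * D t Y' ω ∂μ)
            - b * (μ (A \ Bs)).toReal := by
        have hfe : Set.indicator (A \ Bs) (fun ω' => D t Y' ω' - b)
            = fun ω => Set.indicator (A \ Bs) (fun _ => (1:ℝ)) ω * D t Y' ω
              - Set.indicator (A \ Bs) (fun _ => b) ω := by
          funext ω
          by_cases hω : ω ∈ A \ Bs <;> simp [Set.indicator_apply, hω]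
        rw [hfe, integral_sub (hintS _ hADm) ((integrable_const b).indicator hADm),
          integral_indicator_const b hADm, smul_eq_mul]
        rw [measureReal_def]; ring
      have hW2eq : (∫ ω, Set.indicator (Bs \ A) (fun ω' => b - D t Y' ω') ω ∂μ)
          = b * (μ (Bs \ A)).toReal
            - ∫ ω, Set.indicator (Bs \ A) (fun _ => (1:ℝ)) ω * D t Y' ω ∂μ := by
        have hfe : Set.indicator (Bs \ A) (fun ω' => b - D t Y' ω')
            = fun ω => Set.indicator (Bs \ A) (fun _ => b) ω
              - Set.indicator (Bs \ A) (fun _ => (1:ℝ)) ω * D t Y' ω := by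
          funext ω
          by_cases hω : ω ∈ Bs \ A <;> simp [Set.indicator_apply, hω]
        rw [hfe, integral_sub ((integrable_const b).indicator hBDm) (hintS _ hBDm),
          integral_indicator_const b hBDm, smul_eq_mul]
        rw [measureReal_def]; ring
      have hW1nn : ∀ ω, 0 ≤ Set.indicator (A \ Bs) (fun ω' => D t Y' ω' - b) ω := by
        intro ω
        by_cases hω : ω ∈ A \ Bs
        · rw [Set.indicator_of_mem hω]
          have : b < D t Y' ω := hω.1
          linarith
        · rw [Set.indicator_of_notMem hω]
      have hW2nn : ∀ ω, 0 ≤ Set.indicator (Bs \ A) (fun ω' => b - D t Y' ω') ω := by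
        intro ω
        by_cases hω : ω ∈ Bs \ A
        · rw [Set.indicator_of_mem hω]
          have : ¬ b < D t Y' ω := hω.2
          push_neg at this
          linarith
        · rw [Set.indicator_of_notMem hω]
      have hW1int : Integrable (Set.indicator (A \ Bs) (fun ω' => D t Y' ω' - b)) μ :=
        ((hZ2.integrable one_le_two).sub (integrable_const b)).indicator hADm
      have hi1 : 0 ≤ ∫ ω, Set.indicator (A \ Bs) (fun ω' => D t Y' ω' - b) ω ∂μ :=
        integral_nonneg hW1nn
      have hi2 : 0 ≤ ∫ ω, Set.indicator (Bs \ A) (fun ω' => b - D t Y' ω') ω ∂μ :=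
        integral_nonneg hW2nn
      have hz1 : (∫ ω, Set.indicator (A \ Bs) (fun ω' => D t Y' ω' - b) ω ∂μ) = 0 := by
        rw [hW1eq] at hi1 ⊢
        rw [hW2eq] at hi2
        rw [hddr, hkey0] at hi1 ⊢
        linarith
      have hW1ae := (integral_eq_zero_iff_of_nonneg hW1nn hW1int).1 hz1
      have hABnull : μ (A \ Bs) = 0 := by
        refine measure_mono_null ?_ (ae_iff.1 hW1ae)
        intro ω hω
        simp only [Set.mem_setOf_eq, Set.indicator_of_mem hω, Pi.zero_apply]
        have hb : b < D t Y' ω := hω.1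
        intro hc
        rw [sub_eq_zero] at hc
        exact absurd hc (ne_of_gt hb)
      exact ⟨hABnull, hdd ▸ hABnull⟩
    -- use the richness assumption
    rcases hrich with ⟨U, hU, hUlaw⟩ | ⟨ht0, hbot⟩
    swap
    · -- trivial initial σ-algebra: A is ∅ or univ
      rw [ht0, hbot] at hA
      rcases MeasurableSpace.measurableSet_bot_iff.mp hA with h | h
      · rw [h] at hApos; simp at hApos
      · rw [h] at hAlt; simp at hAlt
    -- main case: use the uniform random variable
    have hμAne : μ A ≠ ⊤ := measure_ne_top μ A
    set p := (μ A).toReal with hpdef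
    have hp0 : 0 < p := ENNReal.toReal_pos hApos.ne' hμAne
    have hp1 : p < 1 := by
      have := (ENNReal.toReal_lt_toReal hμAne (by norm_num)).2 hAlt
      simpa using this
    have hpA : ENNReal.ofReal p = μ A := ENNReal.ofReal_toReal hμAne
    set B₁ := {ω | U ω ≤ p} with hB₁def
    set B₂ := {ω | U ω ≤ 1 - p}ᶜ with hB₂def
    have hB₁m : MeasurableSet[F t] B₁ := measurableSet_le hU measurable_const
    have hB₂m : MeasurableSet[F t] B₂ := (measurableSet_le hU measurable_const).compl
    have hμB₁ : μ B₁ = μ A := by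
      rw [hB₁def, hUlaw p ⟨hp0.le, hp1.le⟩]; exact hpA
    have hμB₂ : μ B₂ = μ A := by
      rw [hB₂def, measure_compl (hFle t _ (measurableSet_le hU measurable_const))
        (measure_ne_top μ _), hUlaw (1 - p) ⟨by linarith, by linarith⟩, measure_univ]
      have h1 : ENNReal.ofReal (1 - p) = 1 - ENNReal.ofReal p := by
        rw [ENNReal.ofReal_sub _ hp0.le, ENNReal.ofReal_one]
      rw [h1, ENNReal.sub_sub_cancel (by norm_num) (by
        rw [← ENNReal.ofReal_one]
        exact ENNReal.ofReal_le_ofReal hp1.le)]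
      exact hpA
    obtain ⟨h1d, h1e⟩ := hdiff B₁ hB₁m hμB₁
    obtain ⟨h2d, h2e⟩ := hdiff B₂ hB₂m hμB₂
    rcases le_or_gt p (1 - p) with hple | hpgt
    · -- B₁ and B₂ are disjoint, but both a.e. equal to A
      have hsub : B₁ ⊆ B₂ᶜ := by
        intro ω hω
        simp only [hB₂def, compl_compl, Set.mem_setOf_eq]
        exact le_trans hω hple
      have hle0 : μ B₁ ≤ μ (B₁ \ A) + μ (A \ B₂) := by
        refine le_trans (measure_mono ?_) (measure_union_le _ _)
        intro ω hω
        by_cases hA' : ω ∈ A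
        · exact Or.inr ⟨hA', fun hB2 => (hsub hω) hB2⟩
        · exact Or.inl ⟨hω, hA'⟩
      rw [h1e, h2d] at hle0
      rw [hμB₁] at hle0
      simp only [add_zero, le_zero_iff] at hle0
      exact absurd hle0 hApos.ne'
    · -- the complements of B₁ and B₂ are disjoint
      have hsub : B₁ᶜ ⊆ B₂ := by
        intro ω hω
        simp only [hB₁def, Set.mem_compl_iff, Set.mem_setOf_eq, not_le] at hω
        simp only [hB₂def, Set.mem_compl_iff, Set.mem_setOf_eq, not_le]
        linarith
      have hle0 : μ B₁ᶜ ≤ μ (B₂ \ A) + μ (A \ B₁) := by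
        refine le_trans (measure_mono ?_) (measure_union_le _ _)
        intro ω hω
        by_cases hA' : ω ∈ A
        · exact Or.inr ⟨hA', hω⟩
        · exact Or.inl ⟨hsub hω, hA'⟩
      rw [h2e, h1d] at hle0
      simp only [add_zero, le_zero_iff] at hle0
      have hB₁1 : μ B₁ = 1 := (prob_compl_eq_zero_iff (hFle t _ hB₁m)).1 hle0
      rw [hμB₁] at hB₁1
      exact absurd hB₁1 hAlt.ne
  -- extract the a.s. constant value of `D t Y'`
  obtain ⟨c, hZc⟩ : ∃ c : ℝ, D t Y' =ᵐ[μ] fun _ => c := by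
    set S : Set ℝ := {b : ℝ | μ {ω | b < D t Y' ω} = 0} with hSdef
    have hmono : ∀ a b : ℝ, a ≤ b → a ∈ S → b ∈ S := by
      intro a b hab ha
      exact measure_mono_null (fun ω (hω : b < D t Y' ω) => lt_of_le_of_lt hab hω) ha
    have hSne : S.Nonempty := by
      have hempty : (⋂ n : ℕ, {ω | (n:ℝ) < D t Y' ω}) = ∅ := by
        ext ω
        simp only [Set.mem_iInter, Set.mem_setOf_eq, Set.mem_empty_iff_false, iff_false,
          not_forall, not_lt]
        obtain ⟨n, hn⟩ := exists_nat_gt (D t Y' ω)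
        exact ⟨n, hn.le⟩
      have htend := tendsto_measure_iInter_atTop
        (fun n : ℕ => (measurableSet_lt measurable_const hZm0).nullMeasurableSet)
        (fun a b hab => fun ω (hω : (b:ℝ) < D t Y' ω) =>
          lt_of_le_of_lt (by exact_mod_cast hab) hω)
        ⟨0, measure_ne_top μ _⟩
      rw [hempty, measure_empty] at htend
      have hev := htend.eventually_lt_const (by norm_num : (0:ENNReal) < 1)
      obtain ⟨n, hn⟩ := hev.exists
      rcases hlevel n with h | h
      · exact ⟨(n:ℝ), h⟩
      · exact absurd (by simpa [Function.comp] using hn) (by simp [h])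
    have hSbdd : BddBelow S := by
      refine ⟨0, fun b hb => ?_⟩
      by_contra hneg
      push_neg at hneg
      have h1 : μ {ω | b < D t Y' ω} = 1 := by
        have hae : ∀ᵐ ω ∂μ, ω ∈ {ω | b < D t Y' ω} := by
          filter_upwards [hZpos] with ω hω
          simp only [Pi.zero_apply] at hω
          exact lt_of_lt_of_le hneg hω
        have := measure_congr (Filter.eventuallyEq_univ.2 hae)
        simpa using this
      rw [hSdef] at hb
      exact absurd (hb.symm.trans h1) (by norm_num)
    set c := sInf S with hcdef
    have hle : ∀ᵐ ω ∂μ, D t Y' ω ≤ c := by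
      have hnull : μ {ω | c < D t Y' ω} = 0 := by
        have hsup : {ω | c < D t Y' ω}
            ⊆ ⋃ n : ℕ, {ω | c + 1/((n:ℝ)+1) < D t Y' ω} := by
          intro ω hω
          obtain ⟨n, hn⟩ := exists_nat_one_div_lt (K := ℝ) (sub_pos.2 hω)
          refine Set.mem_iUnion.2 ⟨n, ?_⟩
          simp only [Set.mem_setOf_eq]
          have : (1:ℝ)/((n:ℝ)+1) < D t Y' ω - c := hn
          linarith
        refine measure_mono_null hsup (measure_iUnion_null fun n => ?_)
        have hpos : (0:ℝ) < 1/((n:ℝ)+1) := by positivity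
        obtain ⟨b, hbS, hblt⟩ := exists_lt_of_csInf_lt hSne
          (show sInf S < c + 1/((n:ℝ)+1) by rw [← hcdef]; linarith)
        exact hmono b _ hblt.le hbS
      rw [ae_iff]
      simpa only [not_le] using hnull
    have hge : ∀ᵐ ω ∂μ, c ≤ D t Y' ω := by
      have hnull : μ {ω | D t Y' ω < c} = 0 := by
        have hsub : {ω | D t Y' ω < c}
            ⊆ ⋃ n : ℕ, {ω | c - 1/((n:ℝ)+1) < D t Y' ω}ᶜ := by
          intro ω hω
          obtain ⟨n, hn⟩ := exists_nat_one_div_lt (K := ℝ) (sub_pos.2 hω)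
          refine Set.mem_iUnion.2 ⟨n, ?_⟩
          simp only [Set.mem_compl_iff, Set.mem_setOf_eq, not_lt]
          have : (1:ℝ)/((n:ℝ)+1) < c - D t Y' ω := hn
          linarith
        refine measure_mono_null hsub (measure_iUnion_null fun n => ?_)
        have hpos : (0:ℝ) < 1/((n:ℝ)+1) := by positivity
        have hnot : (c - 1/((n:ℝ)+1)) ∉ S := by
          intro hmem
          have := csInf_le hSbdd hmem
          rw [← hcdef] at this
          linarith
        have h1 : μ {ω | c - 1/((n:ℝ)+1) < D t Y' ω} = 1 :=
          (hlevel _).resolve_left hnot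
        exact (prob_compl_eq_zero_iff
          (measurableSet_lt measurable_const hZm0)).2 h1
      rw [ae_iff]
      simpa only [not_le] using hnull
    refine ⟨c, ?_⟩
    filter_upwards [hle, hge] with ω h1 h2
    exact le_antisymm h1 h2
  -- conclusion
  refine ⟨c, (Dae_aux hD ht hY hY' hYY').trans hZc, ?_⟩
  have hrecY := hD.recur 0 t le_rfl ht.1 ht.2 Y' hY'
  have hml : MemLp (μ[Y'|F t]) 2 μ := (memLp_const (∫ x, Y' x ∂μ)).ae_eq hce.symm
  have e1 : D 0 (μ[Y'|F t]) =ᵐ[μ] 0 :=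
    (Dae_aux hD h0T hml (memLp_const _) hce).trans (Dconst_aux hD h0T _)
  have e2 : μ[D t Y'|F 0] =ᵐ[μ] fun _ => c := by
    refine (condExp_congr_ae hZc).trans ?_
    rw [condExp_const (hFle 0) c]
  refine (Dae_aux hD h0T hY hY' hYY').trans ?_
  filter_upwards [hrecY, e1, e2] with ω h1 h2 h3
  simp only [Pi.add_apply] at h1
  simp only [Pi.zero_apply] at h2
  rw [h1, h2, h3, zero_add]
end

section
/- Quadratic scaling on Brownian marginals: let (D_t)_{t∈[0,T]} be a distribution invariant dynamic deviation measure on a filtered probability space supporting a one-dimensional Brownian motion (B_t)_{t∈[0,T]} adapted to (F_t) with B_t − B_s independent of F_s and distributed N(0, t−s) for s ≤ t. Then there exists α > 0 such that for every σ ∈ ℝ and every t ∈ [0,T], D_0(σ B_t) = α σ² t; equivalently, for a standard normal random variable Z in L²(F_T), the function f(σ) := D_0(σZ) satisfies f(σ) = α σ² for all σ ∈ ℝ. -/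
open MeasureTheory Filter Real ProbabilityTheory
open scoped NNReal ENNReal

section Aux

lemma meas_bot_eq {Ω : Type*} (f : Ω → ℝ) (hf : Measurable[⊥] f) (ω ω' : Ω) : f ω = f ω' := by
  by_contra h
  have hs := hf (measurableSet_singleton (f ω))
  rw [MeasurableSpace.measurableSet_bot_iff] at hs
  rcases hs with h0 | h1
  · have : ω ∈ f ⁻¹' {f ω} := rfl
    rw [h0] at this; exact this
  · have h2 : ω' ∈ f ⁻¹' {f ω} := by rw [h1]; trivial
    exact h (Set.mem_singleton_iff.mp h2).symm

lemma pf_var (c a : ℝ) (ha : 0 ≤ a) :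
    NNReal.mk (c^2) (sq_nonneg c) * Real.toNNReal a = Real.toNNReal (c^2 * a) := by
  apply NNReal.eq
  simp [NNReal.coe_mul, Real.coe_toNNReal _ ha, Real.coe_toNNReal _ (mul_nonneg (sq_nonneg c) ha)]

lemma tendsto_eLpNorm_two_of_dominated {Ω : Type*} {m : MeasurableSpace Ω} {μ : Measure Ω}
    (g : ℕ → Ω → ℝ) (bound : Ω → ℝ) (hg : ∀ n, Measurable (g n))
    (hbound : MemLp bound 2 μ) (hle : ∀ n ω, |g n ω| ≤ bound ω)
    (hlim : ∀ ω, Tendsto (fun n => g n ω) atTop (nhds 0)) :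
    Tendsto (fun n => eLpNorm (g n) 2 μ) atTop (nhds 0) := by
  have hb0 : ∀ ω, 0 ≤ bound ω := fun ω => le_trans (abs_nonneg _) (hle 0 ω)
  have key : Tendsto (fun n => ∫⁻ ω, (‖g n ω‖₊ : ℝ≥0∞) ^ (2:ℝ) ∂μ) atTop (nhds 0) := by
    have h0 : (0:ℝ≥0∞) = ∫⁻ _ω, (0:ℝ≥0∞) ∂μ := by simp
    rw [h0]
    refine tendsto_lintegral_of_dominated_convergence
      (fun ω => (‖bound ω‖₊ : ℝ≥0∞) ^ (2:ℝ)) (fun n => ?_) (fun n => ?_) ?_ ?_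
    · exact ((hg n).nnnorm.coe_nnreal_ennreal).pow_const _
    · refine Filter.Eventually.of_forall fun ω => ?_
      refine ENNReal.rpow_le_rpow ?_ (by norm_num)
      rw [ENNReal.coe_le_coe, ← NNReal.coe_le_coe, coe_nnnorm, coe_nnnorm,
        Real.norm_eq_abs, Real.norm_eq_abs, abs_of_nonneg (hb0 ω)]
      exact hle n ω
    · have := (lintegral_rpow_enorm_lt_top_of_eLpNorm_lt_top (p := 2) (by norm_num)
        (by norm_num) hbound.2)
      simpa [enorm_eq_nnnorm] using this.ne
    · refine Filter.Eventually.of_forall fun ω => ?_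
      have h1 : Tendsto (fun n => (‖g n ω‖₊ : ℝ≥0∞)) atTop (nhds 0) := by
        rw [← ENNReal.coe_zero, ENNReal.tendsto_coe]
        have := (hlim ω).nnnorm
        simpa using this
      have := (ENNReal.continuous_rpow_const (y := (2:ℝ))).tendsto 0 |>.comp h1
      simpa [ENNReal.zero_rpow_of_pos, Function.comp_def] using this
  have heq : ∀ n, eLpNorm (g n) 2 μ
      = (∫⁻ ω, (‖g n ω‖₊ : ℝ≥0∞) ^ (2:ℝ) ∂μ) ^ (1/(2:ℝ)) := by
    intro n
    rw [eLpNorm_eq_lintegral_rpow_enorm_toReal (by norm_num) (by norm_num)]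
    norm_num [enorm_eq_nnnorm]
  simp_rw [heq]
  have := (ENNReal.continuous_rpow_const (y := (1/2:ℝ))).tendsto 0 |>.comp key
  simpa [ENNReal.zero_rpow_of_pos, Function.comp_def] using this

lemma memLp_two_id_gaussianReal (v : ℝ≥0) :
    MemLp (id : ℝ → ℝ) 2 (gaussianReal 0 v) := by
  rcases eq_or_ne v 0 with h | h
  · rw [h, gaussianReal_zero_var]
    refine (memLp_const (0:ℝ)).ae_eq ?_
    rw [MeasureTheory.ae_dirac_eq]
    simp [Filter.EventuallyEq]
  · refine (memLp_two_iff_integrable_sq aestronglyMeasurable_id).2 ?_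
    rw [gaussianReal_of_var_ne_zero _ h,
      integrable_withDensity_iff (measurable_gaussianPDF _ _)
        (Filter.Eventually.of_forall fun x => ENNReal.ofReal_lt_top)]
    have hv : (0:ℝ) < (v:ℝ) := by
      have := h; positivity
    have hb : (0:ℝ) < (2*(v:ℝ))⁻¹ := by positivity
    have hint : Integrable (fun x : ℝ =>
        (Real.sqrt (2*π*(v:ℝ)))⁻¹ * (x ^ (2:ℝ) * rexp (-(2*(v:ℝ))⁻¹ * x^2))) :=
      (integrable_rpow_mul_exp_neg_mul_sq hb (by norm_num)).const_mul _
    refine hint.congr (Filter.Eventually.of_forall fun x => ?_)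
    have h2 : (2:ℝ) = ((2:ℕ):ℝ) := by norm_num
    simp only [id_eq, gaussianPDF]
    rw [ENNReal.toReal_ofReal (gaussianPDFReal_nonneg _ _ _), gaussianPDFReal,
      h2, Real.rpow_natCast, sub_zero, neg_div, div_eq_inv_mul, ← neg_mul]
    ring
end Aux
open MeasureTheory

/-- **Quadratic scaling on Brownian marginals.**  Let `(D_t)` be a distribution invariant
dynamic deviation measure on a filtered probability space (trivial initial σ-algebra, the
ambient σ-algebra being `F_T`, horizon `T > 0`) supporting a one-dimensional Brownian motion
`B` adapted to the filtration, with `B_t − B_s` independent of `F_s` and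
`N(0, t−s)`-distributed.  Then there is `α > 0` with `D_0(σ B_t) = α σ² t` for all `σ ∈ ℝ`,
`t ∈ [0,T]`; equivalently, for a standard normal `Z ∈ L²`, `f(σ) := D_0(σ Z)` satisfies
`f(σ) = α σ²` for all `σ ∈ ℝ`. -/
theorem distInvariant_quadratic_scaling {Ω : Type*} {m0 : MeasurableSpace Ω}
    (μ : Measure Ω) [IsProbabilityMeasure μ] (T : ℝ) (hT : 0 < T)
    (F : ℝ → MeasurableSpace Ω) (hFmono : Monotone F) (hFle : ∀ s, F s ≤ m0)
    (hF0 : F 0 = ⊥) (hFT : F T = m0)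
    -- a one-dimensional Brownian motion on `[0,T]` adapted to `F`
    (B : ℝ → Ω → ℝ) (hB0 : ∀ ω, B 0 ω = 0)
    (hBadapted : ∀ t ∈ Set.Icc (0 : ℝ) T, Measurable[F t] (B t))
    (hBindep : ∀ s t : ℝ, 0 ≤ s → s ≤ t → t ≤ T →
      ProbabilityTheory.Indep
        (MeasurableSpace.comap (fun ω => B t ω - B s ω) inferInstance) (F s) μ)
    (hBgauss : ∀ s t : ℝ, 0 ≤ s → s ≤ t → t ≤ T →
      μ.map (fun ω => B t ω - B s ω) =
        ProbabilityTheory.gaussianReal 0 (Real.toNNReal (t - s)))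
    (D : ℝ → (Ω → ℝ) → Ω → ℝ)
    (hD : IsDynamicDeviation μ F T D) (hinv : DistInvariant μ D) :
    ∃ α : ℝ, 0 < α ∧
      (∀ σ : ℝ, ∀ t ∈ Set.Icc (0 : ℝ) T,
        D 0 (fun ω => σ * B t ω) =ᵐ[μ] fun _ => α * σ ^ 2 * t) ∧
      (∀ Z : Ω → ℝ, MemLp Z 2 μ → μ.map Z = ProbabilityTheory.gaussianReal 0 1 →
        ∀ σ : ℝ, D 0 (fun ω => σ * Z ω) =ᵐ[μ] fun _ => α * σ ^ 2) := by
  classical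
  have hΩ : Nonempty Ω := by
    by_contra hΩe
    rw [not_nonempty_iff] at hΩe
    have h1 : μ Set.univ = 1 := measure_univ
    rw [Set.univ_eq_empty_iff.mpr hΩe] at h1
    simp at h1
  obtain ⟨ω₀⟩ := hΩ
  have h0T : (0:ℝ) ∈ Set.Icc (0:ℝ) T := ⟨le_refl 0, hT.le⟩
  have hTT : T ∈ Set.Icc (0:ℝ) T := ⟨hT.le, le_refl T⟩
  have hμne : μ ≠ 0 := IsProbabilityMeasure.ne_zero μ
  have hconsteq : ∀ a b : ℝ, (fun _ : Ω => a) =ᵐ[μ] (fun _ : Ω => b) → a = b := by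
    intro a b hab
    by_contra hne
    have h2 : ∀ᵐ ω ∂μ, (fun _ : Ω => a) ω = (fun _ : Ω => b) ω := hab
    rw [ae_iff] at h2
    have h3 : {ω : Ω | ¬ (fun _ : Ω => a) ω = (fun _ : Ω => b) ω} = Set.univ := by
      ext ω; simp [hne]
    rw [h3, measure_univ] at h2
    exact one_ne_zero h2
  have hconstle : ∀ a : ℝ, ((0:Ω→ℝ) ≤ᵐ[μ] (fun _ : Ω => a)) → 0 ≤ a := by
    intro a hle
    by_contra hna
    push_neg at hna
    have h2 : ∀ᵐ ω ∂μ, (0:Ω→ℝ) ω ≤ (fun _ : Ω => a) ω := hle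
    rw [ae_iff] at h2
    have h3 : {ω : Ω | ¬ (0:Ω→ℝ) ω ≤ (fun _ : Ω => a) ω} = Set.univ := by
      ext ω; simp [not_le.mpr hna]
    rw [h3, measure_univ] at h2
    exact one_ne_zero h2
  have hBmeas : ∀ t, t ∈ Set.Icc (0:ℝ) T → Measurable (B t) :=
    fun t ht => (hBadapted t ht).mono (hFle t) le_rfl
  have hconstD : ∀ X : Ω → ℝ, MemLp X 2 μ → D 0 X = fun _ => D 0 X ω₀ := by
    intro X hX
    funext ω
    have hm : Measurable[⊥] (D 0 X) := by
      have h1 := ((hD.cond 0 h0T).1 X hX).1.measurable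
      rwa [hF0] at h1
    exact meas_bot_eq _ hm ω ω₀
  -- a.e. invariance of D t
  have haeeq : ∀ t, t ∈ Set.Icc (0:ℝ) T → ∀ X Y : Ω → ℝ, MemLp X 2 μ → MemLp Y 2 μ →
      X =ᵐ[μ] Y → D t X =ᵐ[μ] D t Y := by
    intro t ht X Y hX hY hXY
    have h0 : eLpNorm (X - Y) 2 μ = 0 := by
      rw [eLpNorm_eq_zero_iff (hX.aestronglyMeasurable.sub hY.aestronglyMeasurable) (by norm_num)]
      filter_upwards [hXY] with ω h
      simp [Pi.sub_apply, h]
    have hc := hD.cont t ht (fun _ => X) Y (fun _ => hX) hY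
      (by simpa [h0] using (tendsto_const_nhds : Tendsto (fun _ : ℕ => (0:ℝ≥0∞)) atTop _))
    have h1 : eLpNorm (D t X - D t Y) 2 μ = 0 :=
      (tendsto_nhds_unique hc tendsto_const_nhds).symm
    have h2 := (eLpNorm_eq_zero_iff
      ((((hD.cond t ht).1 X hX).2).aestronglyMeasurable.sub
        (((hD.cond t ht).1 Y hY).2).aestronglyMeasurable) (by norm_num)).1 h1
    filter_upwards [h2] with ω h
    have h3 : D t X ω - D t Y ω = 0 := by simpa [Pi.sub_apply] using h
    linarith
  -- translation invariance with unbounded L² translate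
  have hD1' : ∀ s, s ∈ Set.Icc (0:ℝ) T → ∀ X : Ω → ℝ, MemLp X 2 μ → ∀ c : Ω → ℝ,
      Measurable[F s] c → MemLp c 2 μ → D s (X + c) =ᵐ[μ] D s X := by
    intro s hs X hX c hcm hcL2
    have hcm0 : Measurable c := hcm.mono (hFle s) le_rfl
    set cn : ℕ → Ω → ℝ := fun n ω => max (-(n:ℝ)) (min (n:ℝ) (c ω)) with hcn
    have hcnm : ∀ n, Measurable[F s] (cn n) :=
      fun n => measurable_const.max (measurable_const.min hcm)
    have hcnm0 : ∀ n, Measurable (cn n) :=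
      fun n => measurable_const.max (measurable_const.min hcm0)
    have hcnbd : ∀ n ω, |cn n ω| ≤ (n:ℝ) := by
      intro n ω
      rw [abs_le]
      refine ⟨le_max_left _ _, max_le ?_ (min_le_left _ _)⟩
      have : (0:ℝ) ≤ (n:ℝ) := Nat.cast_nonneg n
      linarith
    have hcnle : ∀ n ω, |cn n ω| ≤ |c ω| := by
      intro n ω
      rcases le_total 0 (c ω) with h | h
      · have h2 : (0:ℝ) ≤ min (n:ℝ) (c ω) := le_min (Nat.cast_nonneg n) h
        have h3 : cn n ω = min (n:ℝ) (c ω) :=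
          max_eq_right (le_trans (neg_nonpos.2 (Nat.cast_nonneg n)) h2)
        rw [h3, abs_of_nonneg h2, abs_of_nonneg h]
        exact min_le_right _ _
      · have h2 : min (n:ℝ) (c ω) = c ω := min_eq_right (le_trans h (Nat.cast_nonneg n))
        have h3 : cn n ω ≤ 0 := max_le (neg_nonpos.2 (Nat.cast_nonneg n)) (by rw [h2]; exact h)
        have h4 : c ω ≤ cn n ω := by
          have : c ω ≤ max (-(n:ℝ)) (min (n:ℝ) (c ω)) := by rw [h2]; exact le_max_right _ _
          exact this
        rw [abs_of_nonpos h3, abs_of_nonpos h]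
        linarith
    have hmemcn : ∀ n, MemLp (cn n) 2 μ := fun n =>
      MemLp.of_bound ((hcnm0 n).stronglyMeasurable.aestronglyMeasurable) _
        (Filter.Eventually.of_forall fun ω => by
          rw [Real.norm_eq_abs]; exact hcnbd n ω)
    have htend0 : Tendsto (fun n => eLpNorm ((X + cn n) - (X + c)) 2 μ) atTop (nhds 0) := by
      have heqf : ∀ n : ℕ, (X + cn n) - (X + c) = fun ω => cn n ω - c ω := by
        intro n; funext ω; simp only [Pi.sub_apply, Pi.add_apply]; ring
      have h1 : Tendsto (fun n => eLpNorm (fun ω => cn n ω - c ω) 2 μ) atTop (nhds 0) := by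
        refine tendsto_eLpNorm_two_of_dominated _ (fun ω => 2 * |c ω|)
          (fun n => (hcnm0 n).sub hcm0) ?_ ?_ ?_
        · exact hcL2.norm.const_mul 2
        · intro n ω
          calc |cn n ω - c ω| ≤ |cn n ω| + |c ω| := abs_sub _ _
            _ ≤ 2 * |c ω| := by have := hcnle n ω; linarith
        · intro ω
          refine tendsto_atTop_of_eventually_const (i₀ := Nat.ceil |c ω|) fun n hn => ?_
          have h1 : |c ω| ≤ (n:ℝ) := le_trans (Nat.le_ceil _) (by exact_mod_cast hn)
          have h2 : cn n ω = c ω := by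
            have hmin : min (n:ℝ) (c ω) = c ω :=
              min_eq_right (le_trans (le_abs_self _) h1)
            have hneg : -(n:ℝ) ≤ c ω := by
              have := neg_abs_le (c ω); linarith
            show max (-(n:ℝ)) (min (n:ℝ) (c ω)) = c ω
            rw [hmin, max_eq_right hneg]
          rw [h2, sub_self]
      simpa [heqf] using h1
    have hmemXc : MemLp (X + c) 2 μ := hX.add hcL2
    have hconv := hD.cont s hs (fun n => X + cn n) (X + c)
      (fun n => hX.add (hmemcn n)) hmemXc htend0
    have hD1each : ∀ n, D s (X + cn n) =ᵐ[μ] D s X := fun n =>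
      (hD.cond s hs).2.2.1 X hX (cn n) (hcnm n) ⟨n, fun ω => hcnbd n ω⟩
    have hcongr : ∀ n, eLpNorm (D s (X + cn n) - D s (X + c)) 2 μ
        = eLpNorm (D s X - D s (X + c)) 2 μ := fun n =>
      eLpNorm_congr_ae ((hD1each n).sub (Filter.EventuallyEq.refl _ _))
    rw [show (fun n => eLpNorm (D s (X + cn n) - D s (X + c)) 2 μ)
      = fun _ => eLpNorm (D s X - D s (X + c)) 2 μ from funext hcongr] at hconv
    have h1 : eLpNorm (D s X - D s (X + c)) 2 μ = 0 :=
      (tendsto_nhds_unique hconv tendsto_const_nhds).symm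
    have h2 := (eLpNorm_eq_zero_iff
      ((((hD.cond s hs).1 X hX).2).aestronglyMeasurable.sub
        (((hD.cond s hs).1 (X + c) hmemXc).2).aestronglyMeasurable) (by norm_num)).1 h1
    filter_upwards [h2] with ω h
    have h3 : D s X ω - D s (X + c) ω = 0 := by simpa [Pi.sub_apply] using h
    linarith
  -- laws of scaled increments
  have hlawInc : ∀ (c s t : ℝ), 0 ≤ s → s ≤ t → t ≤ T →
      μ.map (fun ω => c * (B t ω - B s ω))
        = gaussianReal 0 (Real.toNNReal (c^2*(t-s))) := by
    intro c s t hs hst htT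
    have hsIcc : s ∈ Set.Icc (0:ℝ) T := ⟨hs, hst.trans htT⟩
    have htIcc : t ∈ Set.Icc (0:ℝ) T := ⟨hs.trans hst, htT⟩
    have hmeas : Measurable (fun ω => B t ω - B s ω) := (hBmeas t htIcc).sub (hBmeas s hsIcc)
    have h1 : μ.map (fun ω => c * (B t ω - B s ω))
        = (μ.map (fun ω => B t ω - B s ω)).map (fun x => c * x) := by
      rw [Measure.map_map (measurable_const_mul c) hmeas]
      rfl
    rw [h1, hBgauss s t hs hst htT, gaussianReal_map_const_mul c, mul_zero,
      pf_var c _ (sub_nonneg.2 hst)]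
  have hlawB : ∀ (c t : ℝ), t ∈ Set.Icc (0:ℝ) T →
      μ.map (fun ω => c * B t ω) = gaussianReal 0 (Real.toNNReal (c^2*t)) := by
    intro c t ht
    have h1 := hlawInc c 0 t (le_refl 0) ht.1 ht.2
    have h2 : (fun ω => c * (B t ω - B 0 ω)) = fun ω => c * B t ω := by
      funext ω; rw [hB0 ω, sub_zero]
    rw [h2] at h1
    rw [h1]
    norm_num
  have hmemGauss : ∀ (X : Ω → ℝ) (v : ℝ≥0), Measurable X →
      μ.map X = gaussianReal 0 v → MemLp X 2 μ := by
    intro X v hXm hlaw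
    have h0 : MemLp (id : ℝ → ℝ) 2 (μ.map X) := by
      rw [hlaw]; exact memLp_two_id_gaussianReal v
    have h1 := (memLp_map_measure_iff aestronglyMeasurable_id hXm.aemeasurable).1 h0
    simpa [Function.comp] using h1
  -- the canonical representatives and φ
  set G : ℝ → Ω → ℝ := fun v ω => Real.sqrt (v/T) * B T ω with hG
  have hGmeas : ∀ v, Measurable (G v) := fun v => (hBmeas T hTT).const_mul _
  have hGlaw : ∀ v : ℝ, μ.map (G v) = gaussianReal 0 (Real.toNNReal v) := by
    intro v
    have h1 := hlawB (Real.sqrt (v/T)) T hTT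
    have h2 : G v = fun ω => Real.sqrt (v/T) * B T ω := rfl
    rw [h2, h1]
    congr 1
    rcases le_or_gt 0 v with hv | hv
    · rw [Real.sq_sqrt (div_nonneg hv hT.le), div_mul_cancel₀ _ (ne_of_gt hT)]
    · have hvd : v / T ≤ 0 := div_nonpos_of_nonpos_of_nonneg hv.le hT.le
      rw [Real.sqrt_eq_zero'.2 hvd]
      rw [Real.toNNReal_of_nonpos hv.le]
      norm_num
  have hGmem : ∀ v : ℝ, MemLp (G v) 2 μ := fun v => hmemGauss _ _ (hGmeas v) (hGlaw v)
  set φ : ℝ → ℝ := fun v => D 0 (G v) ω₀ with hφ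
  have hφconst : ∀ v, D 0 (G v) = fun _ => φ v := fun v => hconstD _ (hGmem v)
  have hφeq : ∀ (X : Ω → ℝ) (v : ℝ), MemLp X 2 μ →
      μ.map X = gaussianReal 0 (Real.toNNReal v) → D 0 X =ᵐ[μ] fun _ => φ v := by
    intro X v hX hlaw
    have h1 := hinv X (G v) hX (hGmem v) (by rw [hlaw, hGlaw])
    refine h1.trans ?_
    rw [hφconst v]
  have hφnn : ∀ v, 0 ≤ φ v := by
    intro v
    have h1 := ((hD.cond 0 h0T).2.2.2.1 (G v) (hGmem v)).1
    rw [hφconst v] at h1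
    exact hconstle _ h1
  have hφneg : ∀ v : ℝ, v ≤ 0 → φ v = 0 := by
    intro v hv
    have hzero : G v = (0 : Ω → ℝ) := by
      funext ω
      show Real.sqrt (v/T) * B T ω = 0
      rw [Real.sqrt_eq_zero'.2 (div_nonpos_of_nonpos_of_nonneg hv hT.le), zero_mul]
    have h1 : D 0 (G v) =ᵐ[μ] 0 := by rw [hzero]; exact (hD.cond 0 h0T).2.1
    rw [hφconst v] at h1
    exact hconsteq (φ v) 0 h1
  -- key recursion identity
  have hkey : ∀ (c s t : ℝ), 0 ≤ s → s ≤ t → t ≤ T →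
      φ (c^2*t) = φ (c^2*s) + φ (c^2*(t-s)) := by
    intro c s t hs hst htT
    have hsT : s ≤ T := hst.trans htT
    have hsIcc : s ∈ Set.Icc (0:ℝ) T := ⟨hs, hsT⟩
    have htIcc : t ∈ Set.Icc (0:ℝ) T := ⟨hs.trans hst, htT⟩
    obtain ⟨inc, hincdef⟩ : ∃ f : Ω → ℝ, f = fun ω => B t ω - B s ω := ⟨_, rfl⟩
    obtain ⟨Δ, hΔdef⟩ : ∃ f : Ω → ℝ, f = fun ω => c * (B t ω - B s ω) := ⟨_, rfl⟩
    obtain ⟨Y, hYdef⟩ : ∃ f : Ω → ℝ, f = fun ω => c * B s ω := ⟨_, rfl⟩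
    obtain ⟨X, hXdef⟩ : ∃ f : Ω → ℝ, f = fun ω => c * B t ω := ⟨_, rfl⟩
    have hincmeas : Measurable inc := by
      rw [hincdef]; exact (hBmeas t htIcc).sub (hBmeas s hsIcc)
    have hXmem : MemLp X 2 μ := by
      rw [hXdef]; exact hmemGauss _ _ ((hBmeas t htIcc).const_mul c) (hlawB c t htIcc)
    have hYmem : MemLp Y 2 μ := by
      rw [hYdef]; exact hmemGauss _ _ ((hBmeas s hsIcc).const_mul c) (hlawB c s hsIcc)
    have hΔmem : MemLp Δ 2 μ := by
      rw [hΔdef]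
      exact hmemGauss _ _ (((hBmeas t htIcc).sub (hBmeas s hsIcc)).const_mul c)
        (hlawInc c s t hs hst htT)
    have hindc : μ[inc | F s] =ᵐ[μ] fun _ => ∫ ω, inc ω ∂μ := by
      refine condExp_indep_eq hincmeas.comap_le (hFle s)
        (measurable_iff_comap_le.2 le_rfl).stronglyMeasurable ?_
      rw [hincdef]
      exact hBindep s t hs hst htT
    obtain ⟨k, hk⟩ : ∃ k : ℝ, k = c * ∫ ω, inc ω ∂μ := ⟨_, rfl⟩
    have hcondΔ : μ[Δ | F s] =ᵐ[μ] fun _ => k := by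
      have h1 : Δ = c • inc := by rw [hΔdef, hincdef]; funext ω; simp [smul_eq_mul]
      rw [h1]
      refine (condExp_smul c inc (F s)).trans ?_
      filter_upwards [hindc] with ω hω
      rw [Pi.smul_apply, hω, smul_eq_mul, hk]
    have hcondY : μ[Y | F s] = Y := by
      refine condExp_of_stronglyMeasurable (hFle s) ?_ (hYmem.integrable one_le_two)
      rw [hYdef]
      exact ((hBadapted s hsIcc).const_mul c).stronglyMeasurable
    have hXsplit : X = Δ + Y := by
      rw [hXdef, hΔdef, hYdef]; funext ω; simp only [Pi.add_apply]; ring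
    have hcondX : μ[X | F s] =ᵐ[μ] Y + fun _ => k := by
      rw [hXsplit]
      refine (condExp_add (hΔmem.integrable one_le_two) (hYmem.integrable one_le_two) (F s)).trans ?_
      rw [hcondY]
      filter_upwards [hcondΔ] with ω hω
      rw [Pi.add_apply, Pi.add_apply, hω]
      ring
    -- recursion for Δ
    have hrecΔ := hD.recur 0 s (le_refl 0) hs hsT Δ hΔmem
    rw [hF0, condExp_bot] at hrecΔ
    have hmcΔ : MemLp (μ[Δ | F s]) 2 μ := (memLp_const k).ae_eq hcondΔ.symm
    have hzero : D 0 (μ[Δ | F s]) =ᵐ[μ] (0:Ω→ℝ) := by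
      have h2 : D 0 (μ[Δ | F s]) =ᵐ[μ] D 0 ((0:Ω→ℝ) + fun _ => k) := by
        refine haeeq 0 h0T _ _ hmcΔ (MemLp.zero.add (memLp_const k)) ?_
        refine hcondΔ.trans (Filter.EventuallyEq.of_eq ?_)
        funext ω; simp
      have h3 : D 0 ((0:Ω→ℝ) + fun _ => k) =ᵐ[μ] D 0 (0:Ω→ℝ) :=
        (hD.cond 0 h0T).2.2.1 0 MemLp.zero _ measurable_const ⟨|k|, fun ω => le_refl _⟩
      exact h2.trans (h3.trans (hD.cond 0 h0T).2.1)
    have hDΔ : D 0 Δ =ᵐ[μ] fun _ => φ (c^2*(t-s)) := by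
      refine hφeq Δ _ hΔmem ?_
      rw [hΔdef]; exact hlawInc c s t hs hst htT
    have hint1 : φ (c^2*(t-s)) = ∫ ω, D s Δ ω ∂μ := by
      refine hconsteq _ _ ?_
      refine hDΔ.symm.trans (hrecΔ.trans ?_)
      filter_upwards [hzero] with ω hω
      rw [Pi.add_apply, hω]
      simp
    -- recursion for X
    have hrecX := hD.recur 0 s (le_refl 0) hs hsT X hXmem
    rw [hF0, condExp_bot] at hrecX
    have hmcX : MemLp (μ[X | F s]) 2 μ := (hYmem.add (memLp_const k)).ae_eq hcondX.symm
    have hDcondX : D 0 (μ[X | F s]) =ᵐ[μ] fun _ => φ (c^2*s) := by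
      have h2 : D 0 (μ[X | F s]) =ᵐ[μ] D 0 (Y + fun _ => k) :=
        haeeq 0 h0T _ _ hmcX (hYmem.add (memLp_const k)) hcondX
      have h3 : D 0 (Y + fun _ => k) =ᵐ[μ] D 0 Y :=
        (hD.cond 0 h0T).2.2.1 Y hYmem _ measurable_const ⟨|k|, fun ω => le_refl _⟩
      have h4 : D 0 Y =ᵐ[μ] fun _ => φ (c^2*s) := by
        refine hφeq Y _ hYmem ?_
        rw [hYdef]; exact hlawB c s hsIcc
      exact h2.trans (h3.trans h4)
    have hDsX : D s X =ᵐ[μ] D s Δ := by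
      rw [hXsplit]
      refine hD1' s hsIcc Δ hΔmem Y ?_ hYmem
      rw [hYdef]; exact (hBadapted s hsIcc).const_mul c
    have hintX : ∫ ω, D s X ω ∂μ = ∫ ω, D s Δ ω ∂μ := integral_congr_ae hDsX
    have hDX : D 0 X =ᵐ[μ] fun _ => φ (c^2*t) := by
      refine hφeq X _ hXmem ?_
      rw [hXdef]; exact hlawB c t htIcc
    refine hconsteq _ _ ?_
    refine hDX.symm.trans (hrecX.trans ?_)
    filter_upwards [hDcondX] with ω hω
    rw [Pi.add_apply, hω]
    rw [hintX, ← hint1]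
  -- additivity on nonnegative reals
  have hadd : ∀ a b : ℝ, 0 ≤ a → 0 ≤ b → φ (a+b) = φ a + φ b := by
    intro a b ha hb
    rcases eq_or_lt_of_le (by linarith : (0:ℝ) ≤ a + b) with h | h
    · have ha0 : a = 0 := by linarith
      have hb0 : b = 0 := by linarith
      have hφ0 : φ 0 = 0 := hφneg 0 le_rfl
      rw [ha0, hb0]
      simp [hφ0]
    · have hab : a + b ≠ 0 := ne_of_gt h
      have hc2 : (Real.sqrt ((a+b)/T))^2 = (a+b)/T := Real.sq_sqrt (div_nonneg h.le hT.le)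
      have hs0 : 0 ≤ a/(a+b)*T := by positivity
      have hsT : a/(a+b)*T ≤ T := by
        have h1 : a/(a+b) ≤ 1 := (div_le_one h).2 (by linarith)
        exact mul_le_of_le_one_left hT.le h1
      have e1 : (Real.sqrt ((a+b)/T))^2 * T = a + b := by
        rw [hc2]; field_simp
      have e2 : (Real.sqrt ((a+b)/T))^2 * (a/(a+b)*T) = a := by
        rw [hc2]; field_simp
      have e3 : (Real.sqrt ((a+b)/T))^2 * (T - a/(a+b)*T) = b := by
        rw [mul_sub, e1, e2]; ring
      have hk := hkey (Real.sqrt ((a+b)/T)) (a/(a+b)*T) T hs0 hsT (le_refl T)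
      rw [e1, e2, e3] at hk
      exact hk
  -- continuity of φ
  have hBTmem : MemLp (B T) 2 μ := by
    have h1 := hmemGauss _ _ ((hBmeas T hTT).const_mul 1) (hlawB 1 T hTT)
    simpa [one_mul] using h1
  have hφcont : Continuous φ := by
    rw [continuous_iff_seqContinuous]
    intro u v huv
    have hcoef : Tendsto (fun n => Real.sqrt (u n / T)) atTop (nhds (Real.sqrt (v/T))) :=
      (Real.continuous_sqrt.tendsto (v/T)).comp (huv.div_const T)
    have htnd : Tendsto (fun n => eLpNorm (G (u n) - G v) 2 μ) atTop (nhds 0) := by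
      have heq : ∀ w : ℝ, ∀ n : ℕ, G (u n) - G w
          = (Real.sqrt (u n/T) - Real.sqrt (w/T)) • (B T) := by
        intro w n; funext ω
        show Real.sqrt (u n/T) * B T ω - Real.sqrt (w/T) * B T ω = _
        rw [Pi.smul_apply, smul_eq_mul]; ring
      have h2 : (fun n => eLpNorm (G (u n) - G v) 2 μ)
          = fun n => (‖Real.sqrt (u n/T) - Real.sqrt (v/T)‖₊ : ℝ≥0∞) * eLpNorm (B T) 2 μ := by
        funext n; rw [heq v n, eLpNorm_const_smul, enorm_eq_nnnorm]
      rw [h2]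
      have h3 : Tendsto (fun n => (‖Real.sqrt (u n/T) - Real.sqrt (v/T)‖₊ : ℝ≥0∞))
          atTop (nhds 0) := by
        rw [← ENNReal.coe_zero, ENNReal.tendsto_coe]
        have h4 : Tendsto (fun n => Real.sqrt (u n/T) - Real.sqrt (v/T)) atTop (nhds 0) := by
          have h5 := hcoef.sub (tendsto_const_nhds (x := Real.sqrt (v/T)) (f := atTop))
          simpa using h5
        have h6 := (continuous_nnnorm.tendsto (0:ℝ)).comp h4
        simpa [Function.comp_def] using h6
      have h5 := ENNReal.Tendsto.mul_const h3 (Or.inr hBTmem.2.ne)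
      simpa using h5
    have hDconv := hD.cont 0 h0T (fun n => G (u n)) (G v) (fun n => hGmem _) (hGmem v) htnd
    have heq2 : ∀ n, eLpNorm (D 0 (G (u n)) - D 0 (G v)) 2 μ
        = (‖φ (u n) - φ v‖₊ : ℝ≥0∞) := by
      intro n
      have h6 : D 0 (G (u n)) - D 0 (G v) = fun _ => φ (u n) - φ v := by
        rw [hφconst (u n), hφconst v]; rfl
      rw [h6, eLpNorm_const _ (by norm_num) hμne]
      simp [measure_univ, enorm_eq_nnnorm]
    rw [show (fun n => eLpNorm (D 0 (G (u n)) - D 0 (G v)) 2 μ)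
      = fun n => (‖φ (u n) - φ v‖₊ : ℝ≥0∞) from funext heq2] at hDconv
    rw [← ENNReal.coe_zero, ENNReal.tendsto_coe] at hDconv
    have h7 : Tendsto (fun n => ‖φ (u n) - φ v‖) atTop (nhds 0) := by
      have h8 := (NNReal.continuous_coe.tendsto 0).comp hDconv
      simpa [Function.comp_def] using h8
    have h9 : Tendsto (fun n => φ (u n)) atTop (nhds (φ v)) :=
      tendsto_iff_norm_sub_tendsto_zero.2 h7
    exact h9
  -- linearity of φ on nonnegatives
  set Φ : ℝ → ℝ := fun x => φ (max x 0) - φ (max (-x) 0) with hΦdef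
  have hpn : ∀ x : ℝ, max x 0 - max (-x) 0 = x := by
    intro x
    rcases le_total 0 x with h | h
    · rw [max_eq_left h, max_eq_right (neg_nonpos.2 h)]; ring
    · rw [max_eq_right h, max_eq_left (neg_nonneg.2 h)]; ring
  have hΦa : ∀ x y : ℝ, Φ (x+y) = Φ x + Φ y := by
    intro x y
    have k1 := hadd (max (x+y) 0) (max (-x) 0 + max (-y) 0) (le_max_right _ _)
      (add_nonneg (le_max_right _ _) (le_max_right _ _))
    have k2 := hadd (max (-x) 0) (max (-y) 0) (le_max_right _ _) (le_max_right _ _)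
    have k3 := hadd (max (-(x+y)) 0) (max x 0 + max y 0) (le_max_right _ _)
      (add_nonneg (le_max_right _ _) (le_max_right _ _))
    have k4 := hadd (max x 0) (max y 0) (le_max_right _ _) (le_max_right _ _)
    have harg : max (x+y) 0 + (max (-x) 0 + max (-y) 0)
        = max (-(x+y)) 0 + (max x 0 + max y 0) := by
      have p1 := hpn x; have p2 := hpn y; have p3 := hpn (x+y)
      linarith
    have main : φ (max (x+y) 0) + (φ (max (-x) 0) + φ (max (-y) 0))
        = φ (max (-(x+y)) 0) + (φ (max x 0) + φ (max y 0)) := by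
      rw [← k2, ← k1, harg, k3, k4]
    show φ (max (x+y) 0) - φ (max (-(x+y)) 0)
      = (φ (max x 0) - φ (max (-x) 0)) + (φ (max y 0) - φ (max (-y) 0))
    linarith
  have hΦc : Continuous Φ := by
    rw [hΦdef]
    exact (hφcont.comp (continuous_id.max continuous_const)).sub
      (hφcont.comp (continuous_neg.max continuous_const))
  have hlinΦ : ∀ x : ℝ, Φ x = x * Φ 1 := by
    intro x
    have h1 := map_real_smul (AddMonoidHom.mk' Φ (fun a b => hΦa a b)) hΦc x 1
    simpa [smul_eq_mul] using h1
  have hφlin : ∀ v : ℝ, 0 ≤ v → φ v = v * φ 1 := by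
    have hΦφ : ∀ v : ℝ, 0 ≤ v → Φ v = φ v := by
      intro v hv
      show φ (max v 0) - φ (max (-v) 0) = φ v
      rw [max_eq_left hv, max_eq_right (neg_nonpos.2 hv), hφneg 0 le_rfl]
      ring
    intro v hv
    rw [← hΦφ v hv, hlinΦ v, hΦφ 1 zero_le_one]
  -- positivity of the slope
  have hφTpos : 0 < φ T := by
    rcases (hφnn T).lt_or_eq with h | h
    · exact h
    · exfalso
      have hz : D 0 (G T) =ᵐ[μ] 0 := by
        rw [hφconst T, ← h]
        exact Filter.EventuallyEq.of_eq rfl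
      obtain ⟨Yc, hYcm, hXYc⟩ := ((hD.cond 0 h0T).2.2.2.1 (G T) (hGmem T)).2.1 hz
      rw [hF0] at hYcm
      have hYcconst : ∀ ω, Yc ω = Yc ω₀ := fun ω => meas_bot_eq _ hYcm ω ω₀
      have hXc : G T =ᵐ[μ] fun _ => Yc ω₀ :=
        hXYc.trans (Filter.EventuallyEq.of_eq (funext hYcconst))
      have hmap : μ.map (G T) = Measure.dirac (Yc ω₀) := by
        rw [Measure.map_congr hXc, Measure.map_const, measure_univ, one_smul]
      have hg : gaussianReal 0 (Real.toNNReal T) = Measure.dirac (Yc ω₀) := by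
        rw [← hGlaw T, hmap]
      have hTnn : Real.toNNReal T ≠ 0 := ne_of_gt (Real.toNNReal_pos.2 hT)
      have h01 : (gaussianReal 0 (Real.toNNReal T)) {Yc ω₀} = 0 :=
        gaussianReal_absolutelyContinuous 0 hTnn (measure_singleton _)
      rw [hg, Measure.dirac_apply_of_mem (Set.mem_singleton _)] at h01
      exact one_ne_zero h01
  have hαpos : 0 < φ 1 := by
    have h1 := hφlin T hT.le
    nlinarith
  refine ⟨φ 1, hαpos, ?_, ?_⟩
  · intro σ t ht
    have hlaw := hlawB σ t ht
    have hmemX := hmemGauss _ _ ((hBmeas t ht).const_mul σ) hlaw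
    have h1 := hφeq _ (σ^2*t) hmemX hlaw
    have h2 : φ (σ^2*t) = φ 1 * σ^2 * t := by
      rw [hφlin _ (mul_nonneg (sq_nonneg σ) ht.1)]; ring
    rw [h2] at h1
    exact h1
  · intro Z hZ hlawZ σ
    have hZm : AEMeasurable Z μ := hZ.aestronglyMeasurable.aemeasurable
    have hlaw : μ.map (fun ω => σ * Z ω) = gaussianReal 0 (Real.toNNReal (σ^2)) := by
      have h1 : μ.map (fun ω => σ * Z ω) = (μ.map Z).map (fun x => σ * x) := by
        rw [AEMeasurable.map_map_of_aemeasurable (measurable_const_mul σ).aemeasurable hZm]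
        rfl
      rw [h1, hlawZ, gaussianReal_map_const_mul σ, mul_zero]
      congr 1
      rw [← NNReal.coe_inj]
      push_cast
      rw [Real.coe_toNNReal _ (sq_nonneg σ)]
      simp
    have hmemσZ : MemLp (fun ω => σ * Z ω) 2 μ := hZ.const_mul σ
    have h1 := hφeq _ (σ^2) hmemσZ hlaw
    have h2 : φ (σ^2) = φ 1 * σ^2 := by
      rw [hφlin _ (sq_nonneg σ)]; ring
    rw [h2] at h1
    exact h1
end

section
/- Reduction of the risk-sharing problem to an inf-convolution: let D^A, D^B : L² → ℝ be nonnegative maps that are translation invariant (D^i(X + c) = D^i(X) for every X ∈ L² and constant c ∈ ℝ), and set U^i(X) = E[X] − D^i(X). Fix X_A, X_B ∈ L², and for each Y' ∈ L² define the price π_{Y'} = E[Y'] − D^B(X_B + Y') + D^B(X_B), which is the unique price satisfying the participation constraint U^B(Y' − π_{Y'} + X_B) = U^B(X_B). Then for every Y' ∈ L², U^A(X_A − (Y' − π_{Y'})) = E[X_A] + D^B(X_B) − [ D^A(X_A − Y') + D^B(X_B + Y') ]; consequently Y'* maximizes Y' ↦ U^A(X_A − (Y' − π_{Y'})) over L²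 if and only if Y* := Y'* + X_B minimizes Y ↦ D^A(X_A + X_B − Y) + D^B(Y) over L². -/
open MeasureTheory

/-- The mean-deviation utility `U(X) = E[X] − D(X)` associated with a deviation measure `D`. -/
noncomputable def devUtility {Ω : Type*} [MeasurableSpace Ω] (μ : Measure Ω)
    (D : (Ω → ℝ) → ℝ) (X : Ω → ℝ) : ℝ :=
  (∫ ω, X ω ∂μ) - D X

/-- The price `π_{Y'} = E[Y'] − D^B(X_B + Y') + D^B(X_B)` at which agent `B` is willing to
exchange the payoff `Y'`. -/
noncomputable def devPrice {Ω : Type*} [MeasurableSpace Ω] (μ : Measure Ω)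
    (DB : (Ω → ℝ) → ℝ) (XB Y' : Ω → ℝ) : ℝ :=
  (∫ ω, Y' ω ∂μ) - DB (fun ω => XB ω + Y' ω) + DB XB

/-- **Reduction of the risk-sharing problem to an inf-convolution.**  Let `D^A, D^B : L² → ℝ`
be nonnegative and translation invariant, `U^i(X) = E[X] − D^i(X)`, and
`π_{Y'} = E[Y'] − D^B(X_B + Y') + D^B(X_B)`.  Then `π_{Y'}` is the unique price with
`U^B(Y' − π_{Y'} + X_B) = U^B(X_B)`; moreover
`U^A(X_A − (Y' − π_{Y'})) = E[X_A] + D^B(X_B) − [D^A(X_A − Y') + D^B(X_B + Y')]`, and `Y'*`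
maximizes `Y' ↦ U^A(X_A − (Y' − π_{Y'}))` over `L²` iff `Y* = Y'* + X_B` minimizes
`Y ↦ D^A(X_A + X_B − Y) + D^B(Y)` over `L²`. -/
theorem risk_sharing_reduces_to_infConvolution {Ω : Type*} [MeasurableSpace Ω]
    (μ : Measure Ω) [IsProbabilityMeasure μ]
    (DA DB : (Ω → ℝ) → ℝ)
    (hDApos : ∀ X : Ω → ℝ, MemLp X 2 μ → 0 ≤ DA X)
    (hDBpos : ∀ X : Ω → ℝ, MemLp X 2 μ → 0 ≤ DB X)
    (hDAtrans : ∀ X : Ω → ℝ, MemLp X 2 μ → ∀ c : ℝ, DA (fun ω => X ω + c) = DA X)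
    (hDBtrans : ∀ X : Ω → ℝ, MemLp X 2 μ → ∀ c : ℝ, DB (fun ω => X ω + c) = DB X)
    (XA XB : Ω → ℝ) (hXA : MemLp XA 2 μ) (hXB : MemLp XB 2 μ) :
    (∀ Y' : Ω → ℝ, MemLp Y' 2 μ →
      -- the price satisfies the participation constraint, and is the unique such price
      devUtility μ DB (fun ω => Y' ω - devPrice μ DB XB Y' + XB ω) = devUtility μ DB XB ∧
      (∀ p : ℝ,
        devUtility μ DB (fun ω => Y' ω - p + XB ω) = devUtility μ DB XB →
        p = devPrice μ DB XB Y') ∧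
      -- the value of agent A's objective
      devUtility μ DA (fun ω => XA ω - (Y' ω - devPrice μ DB XB Y')) =
        (∫ ω, XA ω ∂μ) + DB XB -
          (DA (fun ω => XA ω - Y' ω) + DB (fun ω => XB ω + Y' ω))) ∧
    -- consequence: maximizers correspond to minimizers of the inf-convolution problem
    (∀ Y'star : Ω → ℝ, MemLp Y'star 2 μ →
      ((∀ Y' : Ω → ℝ, MemLp Y' 2 μ →
          devUtility μ DA (fun ω => XA ω - (Y' ω - devPrice μ DB XB Y')) ≤
            devUtility μ DA (fun ω => XA ω - (Y'star ω - devPrice μ DB XB Y'star))) ↔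
        (∀ Y : Ω → ℝ, MemLp Y 2 μ →
          DA (fun ω => XA ω + XB ω - (Y'star ω + XB ω)) +
              DB (fun ω => Y'star ω + XB ω) ≤
            DA (fun ω => XA ω + XB ω - Y ω) + DB Y))) := by

  have hint : ∀ X : Ω → ℝ, MemLp X 2 μ → Integrable X μ :=
    fun X hX => hX.integrable one_le_two
  -- value of B's utility at shifted position
  have hBval : ∀ (Y' : Ω → ℝ), MemLp Y' 2 μ → ∀ p : ℝ,
      devUtility μ DB (fun ω => Y' ω - p + XB ω) =
        (∫ ω, Y' ω ∂μ) + (∫ ω, XB ω ∂μ) - p - DB (fun ω => XB ω + Y' ω) := by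
    intro Y' hY' p
    have h1 : (fun ω => Y' ω - p + XB ω) = (fun ω => (XB ω + Y' ω) + (-p)) := by
      funext ω; ring
    rw [devUtility, h1, hDBtrans (fun ω => XB ω + Y' ω) (hXB.add hY') (-p),
      integral_add (show Integrable (fun ω => XB ω + Y' ω) μ from (hint _ hXB).add (hint _ hY')) (integrable_const _),
      integral_add (hint _ hXB) (hint _ hY'), integral_const]
    simp; ring
  -- value of A's objective
  have hval : ∀ Y' : Ω → ℝ, MemLp Y' 2 μ →
      devUtility μ DA (fun ω => XA ω - (Y' ω - devPrice μ DB XB Y')) =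
        (∫ ω, XA ω ∂μ) + DB XB -
          (DA (fun ω => XA ω - Y' ω) + DB (fun ω => XB ω + Y' ω)) := by
    intro Y' hY'
    have h1 : (fun ω => XA ω - (Y' ω - devPrice μ DB XB Y')) =
        (fun ω => (XA ω - Y' ω) + devPrice μ DB XB Y') := by
      funext ω; ring
    rw [devUtility, h1, hDAtrans (fun ω => XA ω - Y' ω) (hXA.sub hY') _,
      integral_add (show Integrable (fun ω => XA ω - Y' ω) μ from (hint _ hXA).sub (hint _ hY')) (integrable_const _),
      integral_sub (hint _ hXA) (hint _ hY'), integral_const]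
    simp [devPrice]; ring
  refine ⟨fun Y' hY' => ⟨?_, fun p hp => ?_, hval Y' hY'⟩, fun Y'star hstar => ⟨?_, ?_⟩⟩
  · rw [hBval Y' hY', devUtility, devPrice]; ring
  · rw [hBval Y' hY' p, devUtility] at hp
    rw [devPrice]; linarith
  · intro hmax Y hY
    have hY' : MemLp (fun ω => Y ω - XB ω) 2 μ := hY.sub hXB
    have h := hmax _ hY'
    rw [hval _ hY', hval _ hstar] at h
    have e1 : (fun ω => XA ω - (Y ω - XB ω)) = (fun ω => XA ω + XB ω - Y ω) := by
      funext ω; ring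
    have e2 : (fun ω => XB ω + (Y ω - XB ω)) = (fun ω => Y ω) := by
      funext ω; ring
    have e3 : (fun ω => XA ω - Y'star ω) =
        (fun ω => XA ω + XB ω - (Y'star ω + XB ω)) := by
      funext ω; ring
    have e4 : (fun ω => XB ω + Y'star ω) = (fun ω => Y'star ω + XB ω) := by
      funext ω; ring
    rw [e1, e2, e3, e4] at h
    linarith
  · intro hmin Y' hY'
    have h := hmin (fun ω => XB ω + Y' ω) (hXB.add hY')
    rw [hval _ hY', hval _ hstar]
    have e1 : (fun ω => XA ω + XB ω - (XB ω + Y' ω)) = (fun ω => XA ω - Y' ω) := by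
      funext ω; ring
    have e3 : (fun ω => XA ω + XB ω - (Y'star ω + XB ω)) =
        (fun ω => XA ω - Y'star ω) := by
      funext ω; ring
    have e4 : (fun ω => Y'star ω + XB ω) = (fun ω => XB ω + Y'star ω) := by
      funext ω; ring
    rw [e1, e3, e4] at h
    linarith
end
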